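/- arXiv:2305.03645 — 9 statements merged into one kernel-verified Lean document; each statement's English description precedes it below -/
import Mathlib

section
/- A binary choice probability ρ on A has a binary value representation if and only if it is transitive. -/
/-- A binary choice probability on `A`. -/
def IsBCP {A : Type*} (ρ : A → A → ℝ) : Prop :=
  (∀ i j : A, 0 ≤ ρ i j ∧ ρ i j ≤ 1) ∧
  (∀ i j : A, i ≠ j → (ρ i j = 1 ↔ ρ j i = 0)) ∧
  (∃ ε : ℝ, 0 < ε ∧ ∀ i : A, ρ i i = ε)

/-- Transitivity of a binary choice probability. -/
def BCPTransitive {A : Type*} (ρ : A → A → ℝ) : Prop :=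
  ∀ i j k : A, i ≠ j → j ≠ k → i ≠ k →
    ρ j i * ρ k j * ρ i k = ρ k i * ρ j k * ρ i j

/-- A binary value representation of a binary choice probability: a Paretian utility `w`,
a Fechnerian utility `v` and a symmetric, strictly positive status quo bias index `s`. -/
def HasBVR {A : Type*} (ρ : A → A → ℝ) : Prop :=
  ∃ (v w : A → ℝ) (s : A → A → ℝ),
    (∀ i j : A, 0 < s i j) ∧ (∀ i j : A, s i j = s j i) ∧
    ∀ i j : A,
      (w j < w i → ρ i j = 1) ∧
      (w i = w j →
        ρ i j = s i j * (Real.exp (v i) / (Real.exp (v i) + Real.exp (v j)))) ∧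
      (w i < w j → ρ i j = 0)

private theorem bcp_aux_fwd {A : Type*} (ρ : A → A → ℝ) (h : HasBVR ρ) : BCPTransitive ρ := by
  obtain ⟨v, w, s, hspos, hssym, hrep⟩ := h
  intro i j k hij hjk hik
  have hne : ∀ a b : A, Real.exp (v a) + Real.exp (v b) ≠ 0 := fun a b => by positivity
  rcases lt_trichotomy (w i) (w j) with h1 | h1 | h1 <;>
    rcases lt_trichotomy (w j) (w k) with h2 | h2 | h2 <;>
      rcases lt_trichotomy (w i) (w k) with h3 | h3 | h3 <;>
  first
    | linarith
    | (rw [show ρ j i = 0 from (hrep j i).2.2 (by linarith),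
           show ρ k i = 0 from (hrep k i).2.2 (by linarith)]; ring)
    | (rw [show ρ j i = 0 from (hrep j i).2.2 (by linarith),
           show ρ j k = 0 from (hrep j k).2.2 (by linarith)]; ring)
    | (rw [show ρ k j = 0 from (hrep k j).2.2 (by linarith),
           show ρ k i = 0 from (hrep k i).2.2 (by linarith)]; ring)
    | (rw [show ρ k j = 0 from (hrep k j).2.2 (by linarith),
           show ρ i j = 0 from (hrep i j).2.2 (by linarith)]; ring)
    | (rw [show ρ i k = 0 from (hrep i k).2.2 (by linarith),
           show ρ j k = 0 from (hrep j k).2.2 (by linarith)]; ring)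
    | (rw [show ρ i k = 0 from (hrep i k).2.2 (by linarith),
           show ρ i j = 0 from (hrep i j).2.2 (by linarith)]; ring)
    | (rw [(hrep j i).2.1 (by linarith : w j = w i),
           (hrep k j).2.1 (by linarith : w k = w j),
           (hrep i k).2.1 (by linarith : w i = w k),
           (hrep k i).2.1 (by linarith : w k = w i),
           (hrep j k).2.1 (by linarith : w j = w k),
           (hrep i j).2.1 (by linarith : w i = w j),
           hssym j i, hssym k j, hssym k i];
       field_simp;
       ring)


private theorem bcp_aux_bwd {A : Type*} [Fintype A] (ρ : A → A → ℝ) (hρ : IsBCP ρ)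
    (htr : BCPTransitive ρ) : HasBVR ρ := by
  classical
  obtain ⟨hrange, hiff, ε, hε, hdiag⟩ := hρ
  -- trichotomy of values
  have h01 : ∀ i j : A, ρ i j = 0 ∨ ρ i j = 1 ∨ (0 < ρ i j ∧ ρ i j < 1) := by
    intro i j
    rcases eq_or_lt_of_le (hrange i j).1 with h | h
    · exact Or.inl h.symm
    rcases eq_or_lt_of_le (hrange i j).2 with h' | h'
    · exact Or.inr (Or.inl h')
    · exact Or.inr (Or.inr ⟨h, h'⟩)
  have hone : ∀ i j : A, i ≠ j → ρ i j = 1 → ρ j i = 0 := fun i j h h1 => (hiff i j h).1 h1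
  have hzero : ∀ i j : A, i ≠ j → ρ i j = 0 → ρ j i = 1 := fun i j h h0 => (hiff j i h.symm).2 h0
  have hmid : ∀ i j : A, i ≠ j → 0 < ρ i j ∧ ρ i j < 1 → 0 < ρ j i ∧ ρ j i < 1 := by
    intro i j h hm
    rcases h01 j i with h' | h' | h'
    · exact absurd (hzero j i h.symm h') (by intro h1; rw [h1] at hm; exact lt_irrefl 1 hm.2)
    · exact absurd (hone j i h.symm h') (by intro h0; rw [h0] at hm; exact lt_irrefl 0 hm.1)
    · exact h'
  -- transitivity consequences
  have T1 : ∀ i j k : A, i ≠ j → j ≠ k → i ≠ k → ρ i j = 1 → ρ j k = 1 → ρ i k = 1 := by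
    intro i j k hij hjk hik h1 h2
    have h := htr i j k hij hjk hik
    rw [hone i j hij h1, hone j k hjk h2, h2, h1] at h
    simp only [zero_mul, mul_one] at h
    exact hzero k i hik.symm h.symm
  have T3 : ∀ i j k : A, i ≠ j → j ≠ k → i ≠ k → ρ i j = 1 →
      0 < ρ j k ∧ ρ j k < 1 → ρ i k = 1 := by
    intro i j k hij hjk hik h1 h2
    have h := htr i j k hij hjk hik
    rw [hone i j hij h1, h1] at h
    simp only [zero_mul, mul_one] at h
    have : ρ k i = 0 := by
      rcases mul_eq_zero.mp h.symm with h' | h'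
      · exact h'
      · exact absurd h' (ne_of_gt h2.1)
    exact hzero k i hik.symm this
  have T4 : ∀ i j k : A, i ≠ j → j ≠ k → i ≠ k → 0 < ρ i j ∧ ρ i j < 1 →
      ρ j k = 1 → ρ i k = 1 := by
    intro i j k hij hjk hik h1 h2
    have h := htr i j k hij hjk hik
    rw [hone j k hjk h2, h2] at h
    simp only [mul_zero, zero_mul, mul_one] at h
    have : ρ k i = 0 := by
      rcases mul_eq_zero.mp h.symm with h' | h'
      · exact h'
      · exact absurd h' (ne_of_gt h1.1)
    exact hzero k i hik.symm this
  have T2 : ∀ i j k : A, i ≠ j → j ≠ k → i ≠ k → 0 < ρ i j ∧ ρ i j < 1 →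
      0 < ρ j k ∧ ρ j k < 1 → 0 < ρ i k ∧ ρ i k < 1 := by
    intro i j k hij hjk hik h1 h2
    have h := htr i j k hij hjk hik
    have hji := hmid i j hij h1
    have hkj := hmid j k hjk h2
    rcases h01 i k with h' | h' | h'
    · exfalso
      have hki := hzero i k hik h'
      rw [h', hki] at h
      simp only [mul_zero, one_mul] at h
      nlinarith [h1.1, h2.1]
    · exfalso
      have hki := hone i k hik h'
      rw [h', hki] at h
      simp only [mul_one, zero_mul] at h
      nlinarith [hji.1, hkj.1]
    · exact h'
  -- log-ratio additivity
  have T5 : ∀ i j k : A, i ≠ j → j ≠ k → i ≠ k → 0 < ρ i j ∧ ρ i j < 1 →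
      0 < ρ j k ∧ ρ j k < 1 →
      Real.log (ρ i k) - Real.log (ρ k i) =
        (Real.log (ρ i j) - Real.log (ρ j i)) + (Real.log (ρ j k) - Real.log (ρ k j)) := by
    intro i j k hij hjk hik h1 h2
    have hji := hmid i j hij h1
    have hkj := hmid j k hjk h2
    have hik' := T2 i j k hij hjk hik h1 h2
    have hki := hmid i k hik hik'
    have h := htr i j k hij hjk hik
    have hlog := congrArg Real.log h
    rw [Real.log_mul (mul_pos hji.1 hkj.1).ne' (ne_of_gt hik'.1),
        Real.log_mul (ne_of_gt hji.1) (ne_of_gt hkj.1),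
        Real.log_mul (mul_pos hki.1 h2.1).ne' (ne_of_gt h1.1),
        Real.log_mul (ne_of_gt hki.1) (ne_of_gt h2.1)] at hlog
    linarith
  -- the equivalence classes
  set C : A → Finset A := fun i =>
    Finset.univ.filter (fun k => i = k ∨ (0 < ρ i k ∧ ρ i k < 1)) with hCdef
  have hmemC : ∀ i, i ∈ C i := fun i => Finset.mem_filter.mpr ⟨Finset.mem_univ _, Or.inl rfl⟩
  have hCmem : ∀ i k : A, k ∈ C i ↔ (i = k ∨ (0 < ρ i k ∧ ρ i k < 1)) := by
    intro i k; simp [hCdef]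
  have Csub : ∀ i j : A, i ≠ j → 0 < ρ i j ∧ ρ i j < 1 → C i ⊆ C j := by
    intro i j hij hm k hk
    rw [hCmem] at hk ⊢
    by_cases hki : k = i
    · subst hki
      exact Or.inr (hmid k j hij hm)
    rcases hk with h' | h'
    · exact absurd h'.symm hki
    by_cases hkj : k = j
    · exact Or.inl hkj.symm
    · exact Or.inr (T2 j i k (Ne.symm hij) (Ne.symm hki) (Ne.symm hkj) (hmid i j hij hm) h')
  have Ceq : ∀ i j : A, i ≠ j → 0 < ρ i j ∧ ρ i j < 1 → C i = C j := fun i j hij hm =>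
    Finset.Subset.antisymm (Csub i j hij hm) (Csub j i hij.symm (hmid i j hij hm))
  set L : A → A → ℝ := fun a b => Real.log (ρ a b) - Real.log (ρ b a) with hLdef
  set v : A → ℝ := fun i => (∑ k ∈ C i, L i k) / (C i).card with hvdef
  -- key: within a class, exp v transforms by the odds ratio
  have hkey : ∀ i j : A, i ≠ j → 0 < ρ i j ∧ ρ i j < 1 →
      Real.exp (v i) * ρ j i = Real.exp (v j) * ρ i j := by
    intro i j hij hm
    have hji := hmid i j hij hm
    have hCC := Ceq i j hij hm
    have hterm : ∀ k ∈ C i, L i k - L j k = L i j := by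
      intro k hk
      rw [hCmem] at hk
      by_cases hki : k = i
      · subst hki
        simp only [hLdef]
        ring
      by_cases hkj : k = j
      · subst hkj
        simp only [hLdef]
        ring
      · have hmik : 0 < ρ i k ∧ ρ i k < 1 := by
          rcases hk with h' | h'
          · exact absurd h'.symm hki
          · exact h'
        have := T5 i j k hij (fun h => hkj h.symm) (fun h => hki h.symm) hm
          (T2 j i k hij.symm (fun h => hki h.symm) (fun h => hkj h.symm) hji hmik)
        simp only [hLdef] at *
        linarith
    have hsum : (∑ k ∈ C i, L i k) - (∑ k ∈ C i, L j k) = (C i).card * L i j := by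
      rw [← Finset.sum_sub_distrib]
      rw [Finset.sum_congr rfl hterm]
      rw [Finset.sum_const, nsmul_eq_mul]
    have hcard : (0:ℝ) < (C i).card := by
      exact_mod_cast Finset.card_pos.mpr ⟨i, hmemC i⟩
    have hv : v i - v j = L i j := by
      simp only [hvdef]
      rw [← hCC, div_sub_div_same, hsum]
      field_simp
    have hexp : Real.exp (v i) = Real.exp (v j) * (ρ i j / ρ j i) := by
      have : Real.exp (v i - v j) = ρ i j / ρ j i := by
        rw [hv]
        simp only [hLdef]
        rw [Real.exp_sub, Real.exp_log hm.1, Real.exp_log hji.1]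
      rw [← this, ← Real.exp_add]
      ring_nf
    rw [hexp]
    field_simp
    exact mul_div_cancel_right₀ _ (ne_of_gt hji.1)
  -- the Paretian utility
  set D : A → Finset A := fun i => Finset.univ.filter (fun k => ρ i k = 1 ∧ k ≠ i) with hDdef
  have hDmem : ∀ i k : A, k ∈ D i ↔ (ρ i k = 1 ∧ k ≠ i) := by
    intro i k; simp [hDdef]
  set w : A → ℝ := fun i => ((D i).card : ℝ) with hwdef
  have W1 : ∀ i j : A, i ≠ j → ρ i j = 1 → w j < w i := by
    intro i j hij h1
    have hsub : D j ⊆ D i := by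
      intro k hk
      rw [hDmem] at hk ⊢
      obtain ⟨hk1, hkj⟩ := hk
      have hki : k ≠ i := by
        intro h; rw [h] at hk1
        rw [hone i j hij h1] at hk1
        norm_num at hk1
      exact ⟨T1 i j k hij (Ne.symm hkj) (Ne.symm hki) h1 hk1, hki⟩
    have hss : D j ⊂ D i := by
      rw [Finset.ssubset_iff_of_subset hsub]
      exact ⟨j, (hDmem i j).mpr ⟨h1, hij.symm⟩, fun h => ((hDmem j j).mp h).2 rfl⟩
    simp only [hwdef]
    exact_mod_cast Finset.card_lt_card hss
  have W2 : ∀ i j : A, i ≠ j → 0 < ρ i j ∧ ρ i j < 1 → w i = w j := by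
    intro i j hij hm
    have hji := hmid i j hij hm
    have : D i = D j := by
      ext k
      rw [hDmem, hDmem]
      constructor
      · rintro ⟨hk1, hki⟩
        have hkj : k ≠ j := by
          intro h; rw [h] at hk1
          exact absurd hk1 (ne_of_lt hm.2)
        exact ⟨T4 j i k hij.symm (Ne.symm hki) (Ne.symm hkj) hji hk1, hkj⟩
      · rintro ⟨hk1, hkj⟩
        have hki : k ≠ i := by
          intro h; rw [h] at hk1
          exact absurd hk1 (ne_of_lt hji.2)
        exact ⟨T4 i j k hij (Ne.symm hkj) (Ne.symm hki) hm hk1, hki⟩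
    simp only [hwdef, this]
  -- if w i = w j and i ≠ j then mid
  have Wmid : ∀ i j : A, i ≠ j → w i = w j → 0 < ρ i j ∧ ρ i j < 1 := by
    intro i j hij hw
    rcases h01 i j with h' | h' | h'
    · exact absurd (W1 j i hij.symm (hzero i j hij h')) (by rw [hw]; exact lt_irrefl _)
    · exact absurd (W1 i j hij h') (by rw [hw]; exact lt_irrefl _)
    · exact h'
  set s : A → A → ℝ := fun i j =>
      if w i = w j then ρ i j * ((Real.exp (v i) + Real.exp (v j)) / Real.exp (v i)) else 1
      with hsdef
  refine ⟨v, w, s, ?_, ?_, ?_⟩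
  · intro i j
    simp only [hsdef]
    by_cases h : w i = w j
    · rw [if_pos h]
      have hpos : 0 < ρ i j := by
        by_cases hij : i = j
        · subst hij; rw [hdiag]; exact hε
        · exact (Wmid i j hij h).1
      positivity
    · rw [if_neg h]; norm_num
  · intro i j
    simp only [hsdef]
    by_cases h : w i = w j
    · rw [if_pos h, if_pos h.symm]
      by_cases hij : i = j
      · subst hij; ring
      · have hm := Wmid i j hij h
        have hk := hkey i j hij hm
        have e1 := Real.exp_pos (v i)
        have e2 := Real.exp_pos (v j)
        field_simp
        nlinarith [hk]
    · rw [if_neg h, if_neg (fun h' => h h'.symm)]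
  · intro i j
    simp only [hsdef]
    refine ⟨?_, ?_, ?_⟩
    · intro hlt
      by_cases hij : i = j
      · subst hij; exact absurd hlt (lt_irrefl _)
      rcases h01 i j with h' | h' | h'
      · exact absurd (W1 j i (fun h => hij h.symm) (hzero i j hij h')) (by linarith)
      · exact h'
      · exact absurd (W2 i j hij h') (by intro h; rw [h] at hlt; exact lt_irrefl _ hlt)
    · intro heq
      rw [if_pos heq]
      have e1 := Real.exp_pos (v i)
      have e2 := Real.exp_pos (v j)
      field_simp
    · intro hlt
      by_cases hij : i = j
      · subst hij; exact absurd hlt (lt_irrefl _)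
      rcases h01 i j with h' | h' | h'
      · exact h'
      · exact absurd (W1 i j hij h') (by linarith)
      · exact absurd (W2 i j hij h') (by intro h; rw [h] at hlt; exact lt_irrefl _ hlt)


/-- Theorem 1: a binary choice probability has a binary value representation
if and only if it is transitive. -/
theorem bcp_value_representation_iff_transitive
    {A : Type*} [Fintype A] (hcard : 3 ≤ Fintype.card A)
    (ρ : A → A → ℝ) (hρ : IsBCP ρ) :
    HasBVR ρ ↔ BCPTransitive ρ :=
  ⟨bcp_aux_fwd ρ, bcp_aux_bwd ρ hρ⟩
end

section
/- Suppose a binary choice probability ρ on A has a binary value representation with elements (s, v, w). Then: (i) on each level set of w, the function v is unique up to an additive constant, i.e., if (s', v', w) is another representation with the same w, then for any two alternatives i,j with w(i)=w(j) one has v'(i)−v'(j) = v(i)−v(j); (ii) for all i,j with w(i)=w(j), s(i,j) = ρ(i|j)+ρ(j|i), so s is uniquely determined on each level set of w; moreover ρ(i|j) < 1−ρ(j|i) ⇔ s(i,j) < 1, ρ(i|j) = 1−ρ(j|i) ⇔ s(i,j) = 1, and ρ(i|j) > 1−ρ(j|i) ⇔ s(i,j) > 1. -/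
/-- `(s, v, w)` is a binary value representation of `ρ`. -/
def IsBVRep {A : Type*} (ρ : A → A → ℝ) (s : A → A → ℝ) (v w : A → ℝ) : Prop :=
  (∀ i j : A, 0 < s i j) ∧ (∀ i j : A, s i j = s j i) ∧
  ∀ i j : A,
    (w j < w i → ρ i j = 1) ∧
    (w i = w j →
      ρ i j = s i j * (Real.exp (v i) / (Real.exp (v i) + Real.exp (v j)))) ∧
    (w i < w j → ρ i j = 0)

lemma bvr_key {A : Type*} (ρ : A → A → ℝ) (s : A → A → ℝ) (v w : A → ℝ)
    (hrep : IsBVRep ρ s v w) {i j : A} (hw : w i = w j) :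
    ρ i j * Real.exp (v j) = ρ j i * Real.exp (v i) ∧ 0 < ρ j i ∧
    s i j = ρ i j + ρ j i := by
  obtain ⟨hpos, hsymm, h⟩ := hrep
  have hij := (h i j).2.1 hw
  have hji := (h j i).2.1 hw.symm
  have hD : Real.exp (v i) + Real.exp (v j) ≠ 0 := by positivity
  refine ⟨?_, ?_, ?_⟩
  · rw [hij, hji, hsymm j i]
    field_simp
    ring
  · rw [hji, hsymm j i]
    have : 0 < Real.exp (v j) / (Real.exp (v j) + Real.exp (v i)) := by positivity
    exact mul_pos (hpos i j) this
  · rw [hij, hji, hsymm j i]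
    field_simp
    ring

/-- Lemma 2 (uniqueness properties of a binary value representation): on each level
set of `w` the Fechnerian utility `v` is unique up to an additive constant, and the
status quo bias index `s` is uniquely determined there, with `s` detecting the
direction of the status quo bias. -/
theorem bvr_uniqueness
    {A : Type*} [Fintype A] (hcard : 3 ≤ Fintype.card A)
    (ρ : A → A → ℝ) (hρ : IsBCP ρ)
    (s : A → A → ℝ) (v w : A → ℝ) (hrep : IsBVRep ρ s v w) :
    (∀ (s' : A → A → ℝ) (v' : A → ℝ), IsBVRep ρ s' v' w →
      ∀ i j : A, w i = w j → v' i - v' j = v i - v j) ∧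
    (∀ i j : A, w i = w j →
      s i j = ρ i j + ρ j i ∧
      (ρ i j < 1 - ρ j i ↔ s i j < 1) ∧
      (ρ i j = 1 - ρ j i ↔ s i j = 1) ∧
      (1 - ρ j i < ρ i j ↔ 1 < s i j)) := by
  constructor
  · intro s' v' hrep' i j hw
    obtain ⟨hk, hji, -⟩ := bvr_key ρ s v w hrep hw
    obtain ⟨hk', hji', -⟩ := bvr_key ρ s' v' w hrep' hw
    have hij : 0 < ρ i j := by
      obtain ⟨hk2, hij2, -⟩ := bvr_key ρ s v w hrep hw.symm
      exact hij2
    have hexp : Real.exp (v' i - v' j) = Real.exp (v i - v j) := by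
      rw [Real.exp_sub, Real.exp_sub]
      rw [div_eq_div_iff (by positivity) (by positivity)]
      have h1 : Real.exp (v' i) = ρ i j * Real.exp (v' j) / ρ j i := by
        field_simp; linarith [hk']
      have h2 : Real.exp (v i) = ρ i j * Real.exp (v j) / ρ j i := by
        field_simp; linarith [hk]
      rw [h1, h2]
      field_simp
    have := Real.exp_injective hexp
    linarith [this]
  · intro i j hw
    obtain ⟨-, -, hs⟩ := bvr_key ρ s v w hrep hw
    refine ⟨hs, ?_, ?_, ?_⟩ <;> constructor <;> intro h <;> linarith
end

section
/- Suppose a binary choice probability ρ on A has a binary value representation with elements (s, v, w). Then for all i,j ∈ A: ρ(i|j) ≥ ρ(j|i) if and only if the pair (w(i), v(i)) is greater than or equal to (w(j), v(j)) in the lexicographic order on ℝ². -/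
/-- The weak preference `≿` induced by a binary choice probability with a binary value
representation `(s, v, w)` is represented lexicographically by the pair `(w, v)`:
`ρ(i∣j) ≥ ρ(j∣i)` iff `(w i, v i) ≥_lex (w j, v j)`. -/
theorem bcp_lexicographic_representation
    {A : Type*} [Fintype A] (hcard : 3 ≤ Fintype.card A)
    (ρ : A → A → ℝ) (hρ : IsBCP ρ)
    (s : A → A → ℝ) (v w : A → ℝ) (hrep : IsBVRep ρ s v w) :
    ∀ i j : A, ρ j i ≤ ρ i j ↔ (w j < w i ∨ (w i = w j ∧ v j ≤ v i)) := by
  obtain ⟨hs, hsym, hr⟩ := hrep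
  obtain ⟨hb, -, -⟩ := hρ
  intro i j
  rcases lt_trichotomy (w i) (w j) with h | h | h
  · have h1 : ρ i j = 0 := (hr i j).2.2 h
    have h2 : ρ j i = 1 := (hr j i).1 h
    constructor
    · intro hle; linarith
    · rintro (h' | ⟨h', -⟩) <;> [linarith; exact absurd h' (ne_of_lt h)]
  · have h1 : ρ i j = s i j * (Real.exp (v i) / (Real.exp (v i) + Real.exp (v j))) :=
      (hr i j).2.1 h
    have h2 : ρ j i = s j i * (Real.exp (v j) / (Real.exp (v j) + Real.exp (v i))) :=
      (hr j i).2.1 h.symm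
    have hspos := hs i j
    have hd : 0 < Real.exp (v i) + Real.exp (v j) := by positivity
    constructor
    · intro hle
      right
      refine ⟨h, ?_⟩
      rw [h1, h2, hsym j i, add_comm (Real.exp (v j))] at hle
      have h3 := (mul_le_mul_iff_right₀ hspos).mp hle
      have h4 := (div_le_div_iff_of_pos_right hd).mp h3
      exact Real.exp_le_exp.mp h4
    · rintro (h' | ⟨-, h'⟩)
      · exact absurd h (ne_of_lt h').symm
      · rw [h1, h2, hsym j i, add_comm (Real.exp (v j))]
        have he : Real.exp (v j) ≤ Real.exp (v i) := Real.exp_le_exp.mpr h'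
        gcongr
  · have h1 : ρ i j = 1 := (hr i j).1 h
    have h2 := (hb j i).2
    constructor
    · intro _; exact Or.inl h
    · intro _; linarith
end

section
/- Let λ, β > 0 and Λ ∈ ℝ with Λ ≠ 0, and define ρ⁺ = (1 − e^{βΛ})/(e^{−λΛ} − e^{βΛ}) and ρ⁻ = (1 − e^{−βΛ})/(e^{λΛ} − e^{−βΛ}). Then λΛ = ln(ρ⁺/ρ⁻) and βΛ = ln((1 − ρ⁻)/(1 − ρ⁺)). -/
/-- Lemma (DDM log-odds identities): for the DDM choice probabilities
`ρ⁺ = (1 − e^{βΛ})/(e^{−λΛ} − e^{βΛ})` and `ρ⁻ = (1 − e^{−βΛ})/(e^{λΛ} − e^{−βΛ})`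
with barriers `λ, β > 0` and value difference `Λ ≠ 0`, one has
`λΛ = ln(ρ⁺/ρ⁻)` and `βΛ = ln((1 − ρ⁻)/(1 − ρ⁺))`. -/
theorem ddm_log_odds (lam beta Lam : ℝ) (hlam : 0 < lam) (hbeta : 0 < beta)
    (hLam : Lam ≠ 0) (ρp ρm : ℝ)
    (hρp : ρp = (1 - Real.exp (beta * Lam)) /
      (Real.exp (-(lam * Lam)) - Real.exp (beta * Lam)))
    (hρm : ρm = (1 - Real.exp (-(beta * Lam))) /
      (Real.exp (lam * Lam) - Real.exp (-(beta * Lam)))) :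
    lam * Lam = Real.log (ρp / ρm) ∧
    beta * Lam = Real.log ((1 - ρm) / (1 - ρp)) := by
  set A := lam * Lam with hA
  set B := beta * Lam with hB
  have hAne : A ≠ 0 := mul_ne_zero (ne_of_gt hlam) hLam
  have hBne : B ≠ 0 := mul_ne_zero (ne_of_gt hbeta) hLam
  have hABne : A + B ≠ 0 := by
    intro h
    have h2 : (lam + beta) * Lam = 0 := by
      rw [hA, hB] at h; linarith [h, mul_comm lam Lam]
    rcases mul_eq_zero.mp h2 with h' | h'
    · nlinarith
    · exact hLam h'
  set x := Real.exp A with hx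
  set y := Real.exp B with hy
  have hxne : x ≠ 0 := Real.exp_ne_zero A
  have hyne : y ≠ 0 := Real.exp_ne_zero B
  have hxyne : 1 - x * y ≠ 0 := by
    intro h
    apply hABne
    have hxy1 : x * y = 1 := by linarith
    rw [hx, hy, ← Real.exp_add] at hxy1
    have := Real.exp_injective (by rw [hxy1, Real.exp_zero] : Real.exp (A + B) = Real.exp 0)
    exact this
  have hyne1 : 1 - y ≠ 0 := by
    intro h
    have : Real.exp B = Real.exp 0 := by rw [Real.exp_zero, ← hy]; linarith
    exact hBne (Real.exp_injective this)
  have hxne1 : 1 - x ≠ 0 := by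
    intro h
    have : Real.exp A = Real.exp 0 := by rw [Real.exp_zero, ← hx]; linarith
    exact hAne (Real.exp_injective this)
  have hD1 : Real.exp (-A) - y ≠ 0 := by
    rw [Real.exp_neg, ← hx]
    intro h
    apply hxyne
    have hinv : x⁻¹ = y := by linarith
    have : x * y = 1 := by rw [← hinv]; exact mul_inv_cancel₀ hxne
    linarith
  have hD2 : x - Real.exp (-B) ≠ 0 := by
    rw [Real.exp_neg, ← hy]
    intro h
    apply hxyne
    have hinv : y⁻¹ = x := by linarith
    have : y * x = 1 := by rw [← hinv]; exact mul_inv_cancel₀ hyne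
    linarith [mul_comm x y]
  have hρp' : ρp = x * (1 - y) / (1 - x * y) := by
    rw [hρp]
    rw [div_eq_div_iff hD1 hxyne, Real.exp_neg, ← hx]
    field_simp
    all_goals ring
  have hρm' : ρm = (y - 1) / (x * y - 1) := by
    have hxy1 : x * y - 1 ≠ 0 := by intro h; apply hxyne; linarith
    rw [hρm]
    rw [div_eq_div_iff hD2 hxy1, Real.exp_neg, ← hy]
    field_simp
  have hρmne : ρm ≠ 0 := by
    rw [hρm']
    apply div_ne_zero
    · intro h; apply hyne1; linarith
    · intro h; apply hxyne; linarith
  have hxy1 : x * y - 1 ≠ 0 := by intro h; apply hxyne; linarith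
  have h1p : 1 - ρp = (1 - x) / (1 - x * y) := by
    rw [hρp', eq_div_iff hxyne, sub_mul, div_mul_cancel₀ _ hxyne]
    ring
  have h1m : 1 - ρm = y * (x - 1) / (x * y - 1) := by
    rw [hρm', eq_div_iff hxy1, sub_mul, div_mul_cancel₀ _ hxy1]
    ring
  have h1pne : 1 - ρp ≠ 0 := by
    rw [h1p]
    exact div_ne_zero hxne1 hxyne
  have key1 : ρp / ρm = x := by
    rw [div_eq_iff hρmne, hρp', hρm', ← mul_div_assoc, div_eq_div_iff hxyne hxy1]
    ring
  have key2 : (1 - ρm) / (1 - ρp) = y := by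
    rw [div_eq_iff h1pne, h1m, h1p, ← mul_div_assoc, div_eq_div_iff hxy1 hxyne]
    ring
  constructor
  · rw [key1, hx, Real.log_exp]
  · rw [key2, hy, Real.log_exp]
end

section
/- Let λ, β > 0 and Λ ∈ ℝ with Λ ≠ 0. Define ρ⁺ = (1 − e^{βΛ})/(e^{−λΛ} − e^{βΛ}), ρ⁻ = (1 − e^{−βΛ})/(e^{λΛ} − e^{−βΛ}), and τ⁺ = (1/Λ)[ρ⁺(λ+β) − β]. Then τ⁺ = (λ²/(ln ρ⁺ − ln ρ⁻))·[ρ⁺ + ((ln(1−ρ⁻) − ln(1−ρ⁺))/(ln ρ⁺ − ln ρ⁻))·(ρ⁺ − 1)]. -/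
/-- Lemma (DDM response time in terms of choice probabilities): for the DDM choice
probabilities `ρ⁺`, `ρ⁻` and mean response time `τ⁺ = (1/Λ)[ρ⁺(λ+β) − β]` with barriers
`λ, β > 0` and value difference `Λ ≠ 0`, one has
`τ⁺ = (λ²/(ln ρ⁺ − ln ρ⁻))·[ρ⁺ + ((ln(1−ρ⁻) − ln(1−ρ⁺))/(ln ρ⁺ − ln ρ⁻))·(ρ⁺ − 1)]`. -/
theorem ddm_response_time_formula (lam beta Lam : ℝ) (hlam : 0 < lam)
    (hbeta : 0 < beta) (hLam : Lam ≠ 0) (ρp ρm τp : ℝ)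
    (hρp : ρp = (1 - Real.exp (beta * Lam)) /
      (Real.exp (-(lam * Lam)) - Real.exp (beta * Lam)))
    (hρm : ρm = (1 - Real.exp (-(beta * Lam))) /
      (Real.exp (lam * Lam) - Real.exp (-(beta * Lam))))
    (hτp : τp = (1 / Lam) * (ρp * (lam + beta) - beta)) :
    τp = lam ^ 2 / (Real.log ρp - Real.log ρm) *
      (ρp + (Real.log (1 - ρm) - Real.log (1 - ρp)) /
        (Real.log ρp - Real.log ρm) * (ρp - 1)) := by
  set E := Real.exp (lam * Lam) with hE
  set B := Real.exp (beta * Lam) with hB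
  have hE0 : 0 < E := Real.exp_pos _
  have hB0 : 0 < B := Real.exp_pos _
  have hAeq : Real.exp (-(lam * Lam)) = E⁻¹ := Real.exp_neg _
  have hBeq : Real.exp (-(beta * Lam)) = B⁻¹ := Real.exp_neg _
  rw [hAeq] at hρp
  rw [hBeq] at hρm
  -- sign facts
  have key : (0 < ρp ∧ ρp < 1) ∧ (0 < ρm ∧ ρm < 1) := by
    rcases hLam.lt_or_gt with h | h
    · -- Lam < 0 : E < 1, B < 1
      have hE1 : E < 1 := by
        rw [hE, ← Real.exp_zero]
        exact Real.exp_lt_exp.mpr (by nlinarith)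
      have hB1 : B < 1 := by
        rw [hB, ← Real.exp_zero]
        exact Real.exp_lt_exp.mpr (by nlinarith)
      have hEi : 1 < E⁻¹ := (one_lt_inv₀ hE0).mpr hE1
      have hd1 : 0 < E⁻¹ - B := by linarith
      have hd2 : E - B⁻¹ < 0 := by
        have : 1 < B⁻¹ := (one_lt_inv₀ hB0).mpr hB1
        linarith
      constructor
      · constructor
        · rw [hρp]; exact div_pos (by linarith) hd1
        · rw [hρp, div_lt_one hd1]; linarith
      · constructor
        · rw [hρm]
          apply div_pos_of_neg_of_neg
          · have : 1 < B⁻¹ := (one_lt_inv₀ hB0).mpr hB1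
            linarith
          · exact hd2
        · rw [hρm, div_lt_one_of_neg hd2]
          have : 1 < B⁻¹ := (one_lt_inv₀ hB0).mpr hB1
          linarith
    · -- 0 < Lam : E > 1, B > 1
      have hE1 : 1 < E := by
        rw [hE, ← Real.exp_zero]
        exact Real.exp_lt_exp.mpr (by nlinarith)
      have hB1 : 1 < B := by
        rw [hB, ← Real.exp_zero]
        exact Real.exp_lt_exp.mpr (by nlinarith)
      have hEi : E⁻¹ < 1 := (inv_lt_one₀ hE0).mpr hE1
      have hd1 : E⁻¹ - B < 0 := by linarith
      have hd2 : 0 < E - B⁻¹ := by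
        have : B⁻¹ < 1 := (inv_lt_one₀ hB0).mpr hB1
        linarith
      constructor
      · constructor
        · rw [hρp]; exact div_pos_of_neg_of_neg (by linarith) hd1
        · rw [hρp, div_lt_one_of_neg hd1]; linarith
      · constructor
        · rw [hρm]
          apply div_pos _ hd2
          have : B⁻¹ < 1 := (inv_lt_one₀ hB0).mpr hB1
          linarith
        · rw [hρm, div_lt_one hd2]
          have : B⁻¹ < 1 := (inv_lt_one₀ hB0).mpr hB1
          linarith
  obtain ⟨⟨hρp0, hρp1⟩, hρm0, hρm1⟩ := key
  have hd1 : E⁻¹ - B ≠ 0 := by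
    intro h0
    rw [hρp, h0, div_zero] at hρp0
    exact lt_irrefl 0 hρp0
  have hd2 : E - B⁻¹ ≠ 0 := by
    intro h0
    rw [hρm, h0, div_zero] at hρm0
    exact lt_irrefl 0 hρm0
  have hBE : B * E ≠ 1 := by
    rw [hB, hE, ← Real.exp_add]
    intro h
    rw [← Real.exp_zero] at h
    have h0 : beta * Lam + lam * Lam = 0 := Real.exp_eq_exp.mp h
    have h1 : (beta + lam) * Lam = 0 := by linarith [h0]
    rcases mul_eq_zero.mp h1 with h2 | h2
    · nlinarith
    · exact hLam h2
  have hBE1 : 1 - B * E ≠ 0 := sub_ne_zero.mpr (Ne.symm hBE)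
  have hBE2 : -1 + B * E ≠ 0 := by
    intro h; apply hBE; linarith
  -- key multiplicative relations
  have hrel1 : ρp = E * ρm := by
    rw [hρp, hρm, ← mul_div_assoc, div_eq_div_iff hd1 hd2]
    field_simp
    ring
  have e1 : 1 - ρm = (E - 1) / (E - B⁻¹) := by
    rw [hρm, one_sub_div hd2]; ring_nf
  have e2 : 1 - ρp = (E⁻¹ - 1) / (E⁻¹ - B) := by
    rw [hρp, one_sub_div hd1]; ring_nf
  have hrel2 : 1 - ρm = B * (1 - ρp) := by
    rw [e1, e2, ← mul_div_assoc, div_eq_div_iff hd2 hd1]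
    field_simp
    ring
  have hlog1 : Real.log ρp - Real.log ρm = lam * Lam := by
    rw [hrel1, Real.log_mul (ne_of_gt hE0) (ne_of_gt hρm0), hE, Real.log_exp]
    ring
  have hlog2 : Real.log (1 - ρm) - Real.log (1 - ρp) = beta * Lam := by
    rw [hrel2, Real.log_mul (ne_of_gt hB0) (by linarith), hB, Real.log_exp]
    ring
  rw [hlog1, hlog2, hτp]
  have hlam' : lam ≠ 0 := ne_of_gt hlam
  field_simp
  ring
end

section
/- For all x, y ∈ (0,1) with x ≠ y, the equation 2/(x+y) + ln(y/x)/ln((1−y)/(1−x)) = 1 holds if and only if x = 1 − y. -/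
open Real Set

private lemma w_hasDeriv (s : ℝ) (hs : 0 < s) :
    HasDerivAt (fun u : ℝ => u - u⁻¹ - 2 * Real.log u) (1 + 1/s^2 - 2/s) s := by
  have h := ((hasDerivAt_id s).sub (hasDerivAt_inv hs.ne')).sub
    ((Real.hasDerivAt_log hs.ne').const_mul 2)
  exact h.congr_deriv (by ring)

private lemma aux_w {t : ℝ} (ht : 1 < t) : 2 * Real.log t < t - 1/t := by
  have hmono : StrictMonoOn (fun u : ℝ => u - u⁻¹ - 2 * Real.log u) (Set.Ici 1) := by
    apply strictMonoOn_of_deriv_pos (convex_Ici 1)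
    · intro s hs
      exact (w_hasDeriv s (by linarith [mem_Ici.mp hs])).continuousAt.continuousWithinAt
    · intro s hs
      rw [interior_Ici] at hs
      have hs1 : (1:ℝ) < s := hs
      have hs0 : (0:ℝ) < s := by linarith
      rw [(w_hasDeriv s hs0).deriv]
      have he : 1 + 1/s^2 - 2/s = (1 - 1/s)^2 := by field_simp; ring
      have hp : 0 < 1 - 1/s := by
        rw [sub_pos, div_lt_one hs0]; exact hs1
      rw [he]; positivity
  have := hmono (self_mem_Ici) (mem_Ici.mpr ht.le) ht
  simp only [Real.log_one] at this
  have h1 : (1:ℝ) - 1⁻¹ - 2 * Real.log 1 = 0 := by simp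
  rw [one_div]
  linarith [this, h1]

private lemma u_mono : StrictMonoOn (fun t : ℝ => (t+1) * Real.log t / (t-1)) (Set.Ioi 1) := by
  apply strictMonoOn_of_deriv_pos (convex_Ioi 1)
  · intro s hs
    have hs1 : (1:ℝ) < s := hs
    exact ContinuousAt.continuousWithinAt (by
      apply ContinuousAt.div
      · exact (continuousAt_id.add continuousAt_const).mul
          (Real.continuousAt_log (by linarith))
      · fun_prop
      · intro h; rw [sub_eq_zero] at h; linarith [h])
  · intro s hs
    rw [interior_Ioi] at hs
    have hs1 : (1:ℝ) < s := hs
    have hs0 : (0:ℝ) < s := by linarith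
    have hne : s - 1 ≠ 0 := by intro h; rw [sub_eq_zero] at h; linarith [h]
    have hd : HasDerivAt (fun t : ℝ => (t+1) * Real.log t / (t-1))
        (((1 * Real.log s + (s+1) * s⁻¹) * (s-1) - (s+1) * Real.log s * 1) / (s-1)^2) s := by
      exact (((hasDerivAt_id s).add_const 1).mul (Real.hasDerivAt_log hs0.ne')).div
        ((hasDerivAt_id s).sub_const 1) hne
    rw [hd.deriv]
    apply div_pos _ (by positivity)
    have key := aux_w hs1
    have : (1 * Real.log s + (s+1) * s⁻¹) * (s-1) - (s+1) * Real.log s * 1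
        = (s - 1/s) - 2 * Real.log s := by field_simp; ring
    rw [this]
    linarith

private lemma key_lt (x y : ℝ) (hx : x ∈ Set.Ioo (0 : ℝ) 1)
    (hy : y ∈ Set.Ioo (0 : ℝ) 1) (hlt : x < y) :
    2 / (x + y) + Real.log (y / x) / Real.log ((1 - y) / (1 - x)) = 1 ↔
      x = 1 - y := by
  obtain ⟨hx0, hx1⟩ := hx
  obtain ⟨hy0, hy1⟩ := hy
  have hxne : x ≠ 0 := hx0.ne'
  have h1y : (1:ℝ) - y ≠ 0 := by intro h; nlinarith
  have h1x : (1:ℝ) - x ≠ 0 := by intro h; nlinarith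
  have hyx : y - x ≠ 0 := sub_ne_zero.mpr (ne_of_gt hlt)
  have ha : 1 < y / x := (one_lt_div hx0).mpr hlt
  have hb : 1 < (1 - x) / (1 - y) := (one_lt_div (by linarith)).mpr (by linarith)
  have hla : 0 < Real.log (y / x) := Real.log_pos ha
  have hlb : 0 < Real.log ((1 - x) / (1 - y)) := Real.log_pos hb
  have hL2 : Real.log ((1 - y) / (1 - x)) = -Real.log ((1 - x) / (1 - y)) := by
    rw [← Real.log_inv, inv_div]
  have hs0 : 0 < x + y := by linarith
  rw [hL2, div_neg, ← sub_eq_add_neg]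
  have stepA : 2 / (x + y) - Real.log (y / x) / Real.log ((1 - x) / (1 - y)) = 1 ↔
      (x + y) * Real.log (y / x) = (2 - x - y) * Real.log ((1 - x) / (1 - y)) := by
    rw [div_sub_div _ _ hs0.ne' hlb.ne', div_eq_one_iff_eq (by positivity)]
    constructor <;> intro h <;> nlinarith [h]
  rw [stepA]
  constructor
  · intro h
    have hane : y / x - 1 ≠ 0 := by
      rw [div_sub_one hxne]; exact div_ne_zero hyx hxne
    have hbne : (1 - x) / (1 - y) - 1 ≠ 0 := by
      rw [div_sub_one h1y]
      exact div_ne_zero (by intro hc; apply hyx; linarith [sub_eq_zero.mp hc]) h1y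
    have hua : (y/x + 1) * Real.log (y/x) / (y/x - 1)
        = (x + y) * Real.log (y/x) / (y - x) := by
      rw [div_eq_div_iff hane hyx]; field_simp; ring
    have hub : ((1-x)/(1-y) + 1) * Real.log ((1-x)/(1-y)) / ((1-x)/(1-y) - 1)
        = (2 - x - y) * Real.log ((1-x)/(1-y)) / (y - x) := by
      rw [div_eq_div_iff hbne hyx]; field_simp; ring
    have huab : (y/x + 1) * Real.log (y/x) / (y/x - 1)
        = ((1-x)/(1-y) + 1) * Real.log ((1-x)/(1-y)) / ((1-x)/(1-y) - 1) := by
      rw [hua, hub, h]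
    have hab : y / x = (1 - x) / (1 - y) :=
      u_mono.injOn (Set.mem_Ioi.mpr ha) (Set.mem_Ioi.mpr hb) huab
    have hcross : y * (1 - y) = (1 - x) * x := (div_eq_div_iff hxne h1y).mp hab
    have hz : (y - x) * (1 - x - y) = 0 := by linear_combination hcross
    rcases mul_eq_zero.mp hz with h' | h'
    · exact absurd h' hyx
    · linarith
  · intro h
    have hsum : x + y = 1 := by linarith
    have hab : y / x = (1 - x) / (1 - y) := by
      rw [h]; congr 1; ring
    rw [hab, hsum, show (2:ℝ) - x - y = 1 by linarith]

/-- The locus of pairs `(x, y) ∈ (0,1)², x ≠ y`, solving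
`2/(x+y) + ln(y/x)/ln((1−y)/(1−x)) = 1` is exactly `{(x, y) : x = 1 − y}`. -/
theorem locus_equation_iff (x y : ℝ) (hx : x ∈ Set.Ioo (0 : ℝ) 1)
    (hy : y ∈ Set.Ioo (0 : ℝ) 1) (hxy : x ≠ y) :
    2 / (x + y) + Real.log (y / x) / Real.log ((1 - y) / (1 - x)) = 1 ↔
      x = 1 - y := by
  rcases hxy.lt_or_gt with h | h
  · exact key_lt x y hx hy h
  · have e1 : Real.log (x / y) = -Real.log (y / x) := by
      rw [← Real.log_inv, inv_div]
    have e2 : Real.log ((1 - x) / (1 - y)) = -Real.log ((1 - y) / (1 - x)) := by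
      rw [← Real.log_inv, inv_div]
    have hk := key_lt y x hy hx h
    rw [add_comm y x, e1, e2, neg_div_neg_eq] at hk
    rw [hk]
    constructor <;> intro h' <;> linarith
end

section
/- Let λ, β > 0 and Λ ∈ ℝ with Λ ≠ 0. Define ρ⁺ = (1 − e^{βΛ})/(e^{−λΛ} − e^{βΛ}), ρ⁻ = (1 − e^{−βΛ})/(e^{λΛ} − e^{−βΛ}), τ⁺ = (1/Λ)[ρ⁺(λ+β) − β], ℓ = ln(ρ⁺/ρ⁻) and ℓ̄ = ln((1−ρ⁻)/(1−ρ⁺)). Then ℓ ≠ 0, λ = |ℓ|·√(τ⁺/(ℓρ⁺ + ℓ̄(ρ⁺ − 1))), and β = λ·ℓ̄/ℓ. In particular, the elements λ and β are uniquely identified by (ρ⁺, ρ⁻, τ⁺). -/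
set_option maxHeartbeats 1000000 in

lemma ddm_key (lam beta Lam ρp ρm τp : ℝ) (hlam : 0 < lam) (hbeta : 0 < beta)
    (hLam : Lam ≠ 0)
    (hρp : ρp = (1 - Real.exp (beta * Lam)) /
      (Real.exp (-(lam * Lam)) - Real.exp (beta * Lam)))
    (hρm : ρm = (1 - Real.exp (-(beta * Lam))) /
      (Real.exp (lam * Lam) - Real.exp (-(beta * Lam))))
    (hτp : τp = (1 / Lam) * (ρp * (lam + beta) - beta)) :
    Real.log (ρp / ρm) = lam * Lam ∧
    Real.log ((1 - ρm) / (1 - ρp)) = beta * Lam ∧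
    0 < τp ∧
    lam = |lam * Lam| * Real.sqrt (τp / ((lam * Lam) * ρp + (beta * Lam) * (ρp - 1))) := by
  have hlL : lam * Lam ≠ 0 := mul_ne_zero hlam.ne' hLam
  have hbL : beta * Lam ≠ 0 := mul_ne_zero hbeta.ne' hLam
  set a := Real.exp (lam * Lam) with ha_def
  set b := Real.exp (beta * Lam) with hb_def
  have ha : 0 < a := Real.exp_pos _
  have hb : 0 < b := Real.exp_pos _
  have ha1 : a ≠ 1 := by
    simpa [ha_def, Real.exp_eq_one_iff] using hlL
  have hb1 : b ≠ 1 := by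
    simpa [hb_def, Real.exp_eq_one_iff] using hbL
  have habe : a * b = Real.exp ((lam + beta) * Lam) := by
    rw [ha_def, hb_def, ← Real.exp_add]; ring_nf
  have hab : a * b ≠ 1 := by
    rw [habe, Ne, Real.exp_eq_one_iff]
    exact mul_ne_zero (by positivity) hLam
  have hainv : Real.exp (-(lam * Lam)) = a⁻¹ := by rw [Real.exp_neg]
  have hbinv : Real.exp (-(beta * Lam)) = b⁻¹ := by rw [Real.exp_neg]
  have hc : 1 - a * b ≠ 0 := fun h => hab (by linarith)
  have hc' : a * b - 1 ≠ 0 := fun h => hab (by linarith)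
  have hd1 : a⁻¹ - b ≠ 0 := by
    intro h
    apply hab
    have : a⁻¹ = b := by linarith
    field_simp at this
    linarith
  have hd2 : a - b⁻¹ ≠ 0 := by
    intro h
    apply hab
    have : a = b⁻¹ := by linarith
    rw [this]; field_simp
  have hρp' : ρp = a * (1 - b) / (1 - a * b) := by
    rw [hρp, hainv, div_eq_div_iff hd1 hc]
    field_simp
  have hρm' : ρm = (b - 1) / (a * b - 1) := by
    rw [hρm, hbinv, div_eq_div_iff hd2 hc']
    field_simp
  have hb1' : b - 1 ≠ 0 := fun h => hb1 (by linarith)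
  have ha1' : 1 - a ≠ 0 := fun h => ha1 (by linarith)
  have h1 : ρp / ρm = a := by
    rw [hρp', hρm']
    field_simp
    ring
  have e1 : 1 - ρp = (1 - a) / (1 - a * b) := by
    rw [hρp']
    field_simp
    ring
  have e2 : 1 - ρm = b * (a - 1) / (a * b - 1) := by
    rw [hρm', one_sub_div hc']
    ring
  have h2 : (1 - ρm) / (1 - ρp) = b := by
    rw [e1, e2, div_div_div_eq, div_eq_iff (mul_ne_zero hc' ha1')]
    ring
  refine ⟨by rw [h1, ha_def, Real.log_exp], by rw [h2, hb_def, Real.log_exp], ?_⟩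
  -- positivity of τp
  have hfb : beta * Lam + 1 < b := Real.add_one_lt_exp hbL
  have hfa : -(lam * Lam) + 1 < a⁻¹ := by
    rw [← hainv]; exact Real.add_one_lt_exp (neg_ne_zero.mpr hlL)
  have hfa' : a * (1 - lam * Lam) < 1 := by
    have := (mul_lt_mul_iff_right₀ ha).mpr hfa
    rw [mul_inv_cancel₀ ha.ne'] at this
    nlinarith
  have hf : lam * (a * (1 - b)) + beta * (a - 1) < 0 := by
    nlinarith [mul_lt_mul_of_pos_left hfb (mul_pos hlam ha),
      mul_lt_mul_of_pos_left hfa' hbeta]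
  have hρp'' : ρp * (1 - a * b) = a * (1 - b) := by
    rw [hρp', div_mul_cancel₀ _ hc]
  have hg : ρp * (lam + beta) - beta =
      (lam * (a * (1 - b)) + beta * (a - 1)) / (1 - a * b) := by
    rw [eq_div_iff hc]
    linear_combination (lam + beta) * hρp''
  have hτpos : 0 < τp := by
    rcases hLam.lt_or_gt with hL | hL
    · have hab1 : a * b < 1 := by
        rw [habe]
        exact Real.exp_lt_one_iff.mpr (mul_neg_of_pos_of_neg (by linarith) hL)
      have hgneg : ρp * (lam + beta) - beta < 0 := by
        rw [hg]; exact div_neg_of_neg_of_pos hf (by linarith)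
      rw [hτp]
      have : 1 / Lam < 0 := one_div_neg.mpr hL
      exact mul_pos_of_neg_of_neg this hgneg
    · have hab1 : 1 < a * b := by
        rw [habe]
        exact Real.one_lt_exp_iff.mpr (mul_pos (by linarith) hL)
      have hgpos : 0 < ρp * (lam + beta) - beta := by
        rw [hg]; exact div_pos_of_neg_of_neg hf (by linarith)
      rw [hτp]
      exact mul_pos (by positivity) hgpos
  refine ⟨hτpos, ?_⟩
  have hD : (lam * Lam) * ρp + (beta * Lam) * (ρp - 1) = Lam ^ 2 * τp := by
    have h : Lam * τp = ρp * (lam + beta) - beta := by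
      rw [hτp, ← mul_assoc, mul_one_div_cancel hLam, one_mul]
    linear_combination (-Lam) * h
  rw [hD]
  have hτne : τp ≠ 0 := hτpos.ne'
  have hquot : τp / (Lam ^ 2 * τp) = 1 / Lam ^ 2 := by
    rw [mul_comm, ← div_div, div_self hτne]
  rw [hquot, one_div, Real.sqrt_inv, Real.sqrt_sq_eq_abs, abs_mul, abs_of_pos hlam]
  have habs : |Lam| ≠ 0 := abs_ne_zero.mpr hLam
  rw [mul_assoc, mul_inv_cancel₀ habs, mul_one]


/-- Proposition (identification of the DDM): the barriers `λ` and `β` of a DDM are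
recovered from the generated choice probabilities `ρ⁺, ρ⁻` and mean response time `τ⁺`
via the log-odds `ℓ = ln(ρ⁺/ρ⁻)` and `ℓ̄ = ln((1−ρ⁻)/(1−ρ⁺))`:
`ℓ ≠ 0`, `λ = |ℓ|·√(τ⁺/(ℓρ⁺ + ℓ̄(ρ⁺−1)))` and `β = λℓ̄/ℓ`; in particular `λ` and `β`
are uniquely identified by `(ρ⁺, ρ⁻, τ⁺)`. -/
theorem ddm_identification (lam beta Lam : ℝ) (hlam : 0 < lam) (hbeta : 0 < beta)
    (hLam : Lam ≠ 0) (ρp ρm τp ell ellbar : ℝ)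
    (hρp : ρp = (1 - Real.exp (beta * Lam)) /
      (Real.exp (-(lam * Lam)) - Real.exp (beta * Lam)))
    (hρm : ρm = (1 - Real.exp (-(beta * Lam))) /
      (Real.exp (lam * Lam) - Real.exp (-(beta * Lam))))
    (hτp : τp = (1 / Lam) * (ρp * (lam + beta) - beta))
    (hell : ell = Real.log (ρp / ρm))
    (hellbar : ellbar = Real.log ((1 - ρm) / (1 - ρp))) :
    ell ≠ 0 ∧
    lam = |ell| * Real.sqrt (τp / (ell * ρp + ellbar * (ρp - 1))) ∧
    beta = lam * ellbar / ell ∧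
    (∀ lam' beta' Lam' : ℝ, 0 < lam' → 0 < beta' → Lam' ≠ 0 →
      ρp = (1 - Real.exp (beta' * Lam')) /
        (Real.exp (-(lam' * Lam')) - Real.exp (beta' * Lam')) →
      ρm = (1 - Real.exp (-(beta' * Lam'))) /
        (Real.exp (lam' * Lam') - Real.exp (-(beta' * Lam'))) →
      τp = (1 / Lam') * (ρp * (lam' + beta') - beta') →
      lam' = lam ∧ beta' = beta) := by
  obtain ⟨h1, h2, hτpos, h4⟩ := ddm_key lam beta Lam ρp ρm τp hlam hbeta hLam hρp hρm hτp
  have hell' : ell = lam * Lam := by rw [hell, h1]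
  have hellbar' : ellbar = beta * Lam := by rw [hellbar, h2]
  have hellne : ell ≠ 0 := by rw [hell']; exact mul_ne_zero hlam.ne' hLam
  refine ⟨hellne, by rw [hell', hellbar']; exact h4, ?_, ?_⟩
  · rw [hell', hellbar']
    field_simp
  · intro lam' beta' Lam' hlam' hbeta' hLam' hρp' hρm' hτp'
    obtain ⟨g1, g2, _, g4⟩ :=
      ddm_key lam' beta' Lam' ρp ρm τp hlam' hbeta' hLam' hρp' hρm' hτp'
    have e1 : lam' * Lam' = ell := by rw [hell, g1]
    have e2 : beta' * Lam' = ellbar := by rw [hellbar, g2]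
    have hlameq : lam' = lam := by
      have h4' : lam = |ell| * Real.sqrt (τp / (ell * ρp + ellbar * (ρp - 1))) := by
        rw [hell', hellbar']; exact h4
      rw [g4, e1, e2]; exact h4'.symm
    refine ⟨hlameq, ?_⟩
    have hLameq : Lam' = Lam := by
      have := e1
      rw [hlameq, hell'] at this
      exact mul_left_cancel₀ hlam.ne' this
    have := e2
    rw [hLameq, hellbar'] at this
    exact mul_right_cancel₀ hLam this
end

section
/- Let λ, β > 0 and Λ ∈ ℝ with Λ ≠ 0. Define ρ⁺ = (1 − e^{βΛ})/(e^{−λΛ} − e^{βΛ}), ρ⁻ = (1 − e^{−βΛ})/(e^{λΛ} − e^{−βΛ}), τ⁺ = (1/Λ)[ρ⁺(λ+β) − β] and τ⁻ = (1/(−Λ))[ρ⁻(λ+β) − β]. Then the following are equivalent: (i) β = λ; (ii) τ⁺ = τ⁻; (iii) ρ⁺ = 1 − ρ⁻. Moreover, when β = λ, one has ρ⁺ = 1/(1 + e^{−λΛ}) and τ⁺ = (λ²/(λΛ))·tanh(λΛ/2). -/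
open Real Set in
lemma ddm_aux_sinh_lt_mul_cosh {t : ℝ} (ht : 0 < t) : Real.sinh t < t * Real.cosh t := by
  have key : StrictMonoOn (fun s : ℝ => s * Real.cosh s - Real.sinh s) (Set.Ici 0) := by
    apply strictMonoOn_of_deriv_pos (convex_Ici _)
    · exact ((continuous_id.mul Real.continuous_cosh).sub Real.continuous_sinh).continuousOn
    · intro x hx
      rw [interior_Ici, Set.mem_Ioi] at hx
      have h : HasDerivAt (fun s : ℝ => s * Real.cosh s - Real.sinh s) (x * Real.sinh x) x := by
        have h2 := ((hasDerivAt_id x).mul (Real.hasDerivAt_cosh x)).sub (Real.hasDerivAt_sinh x)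
        refine h2.congr_deriv ?_
        simp only [id]; ring
      rw [h.deriv]
      exact mul_pos hx (Real.sinh_pos_iff.2 hx)
  have h0 := key (Set.mem_Ici.2 le_rfl) (Set.mem_Ici.2 ht.le) ht
  simp only [Real.cosh_zero, Real.sinh_zero, zero_mul, sub_zero] at h0
  linarith

lemma ddm_aux_mono {u v : ℝ} (hu : 0 < u) (huv : u < v) :
    v * Real.sinh u < u * Real.sinh v := by
  have key : StrictMonoOn (fun t : ℝ => u * Real.sinh t - t * Real.sinh u) (Set.Ici u) := by
    apply strictMonoOn_of_deriv_pos (convex_Ici _)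
    · exact ((continuous_const.mul Real.continuous_sinh).sub
        (continuous_id.mul continuous_const)).continuousOn
    · intro x hx
      rw [interior_Ici, Set.mem_Ioi] at hx
      have h : HasDerivAt (fun t : ℝ => u * Real.sinh t - t * Real.sinh u)
          (u * Real.cosh x - Real.sinh u) x := by
        have h2 := ((Real.hasDerivAt_sinh x).const_mul u).sub
          ((hasDerivAt_id x).mul_const (Real.sinh u))
        refine h2.congr_deriv ?_
        ring
      rw [h.deriv]
      have hc : Real.cosh u < Real.cosh x := by
        rw [Real.cosh_lt_cosh, abs_of_pos hu, abs_of_pos (hu.trans hx)]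
        exact hx
      have := ddm_aux_sinh_lt_mul_cosh hu
      nlinarith
  have h0 := key (Set.mem_Ici.2 le_rfl) (Set.mem_Ici.2 huv.le) huv
  simp only [sub_self] at h0
  have : u * Real.sinh u - u * Real.sinh u = 0 := by ring
  nlinarith [h0]

lemma ddm_aux_key {u v : ℝ} (hu : u ≠ 0) (h : |u| < |v|)
    (he : u * Real.sinh v = v * Real.sinh u) : False := by
  have h2 := ddm_aux_mono (abs_pos.2 hu) h
  have h3 : |u| * Real.sinh |v| = |v| * Real.sinh |u| := by
    rw [← Real.abs_sinh, ← Real.abs_sinh, ← abs_mul, ← abs_mul, he]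
  linarith

set_option maxHeartbeats 1000000 in

/-- Proposition (characterization of symmetric DDMs): with barriers `λ, β > 0` and
value difference `Λ ≠ 0`, the conditions `β = λ`, `τ⁺ = τ⁻` and `ρ⁺ = 1 − ρ⁻` are
equivalent; moreover, when `β = λ`, `ρ⁺ = 1/(1 + e^{−λΛ})` and
`τ⁺ = (λ²/(λΛ))·tanh(λΛ/2)`. -/
theorem ddm_symmetric_characterization (lam beta Lam : ℝ) (hlam : 0 < lam)
    (hbeta : 0 < beta) (hLam : Lam ≠ 0) (ρp ρm τp τm : ℝ)
    (hρp : ρp = (1 - Real.exp (beta * Lam)) /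
      (Real.exp (-(lam * Lam)) - Real.exp (beta * Lam)))
    (hρm : ρm = (1 - Real.exp (-(beta * Lam))) /
      (Real.exp (lam * Lam) - Real.exp (-(beta * Lam))))
    (hτp : τp = (1 / Lam) * (ρp * (lam + beta) - beta))
    (hτm : τm = (1 / (-Lam)) * (ρm * (lam + beta) - beta)) :
    (beta = lam ↔ τp = τm) ∧
    (beta = lam ↔ ρp = 1 - ρm) ∧
    (beta = lam →
      ρp = 1 / (1 + Real.exp (-(lam * Lam))) ∧
      τp = lam ^ 2 / (lam * Lam) * Real.tanh (lam * Lam / 2)) := by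
  set a := Real.exp (lam * Lam) with ha
  set b := Real.exp (beta * Lam) with hb
  have ha0 : 0 < a := Real.exp_pos _
  have hb0 : 0 < b := Real.exp_pos _
  have hlb : (0:ℝ) < lam + beta := by linarith
  have hainv : Real.exp (-(lam * Lam)) * a = 1 := by
    rw [ha, ← Real.exp_add]; simp
  have hbinv : Real.exp (-(beta * Lam)) * b = 1 := by
    rw [hb, ← Real.exp_add]; simp
  have hab1 : a * b ≠ 1 := by
    intro hE
    rw [ha, hb, ← Real.exp_add] at hE
    exact (mul_ne_zero hlb.ne' hLam) (by linear_combination (Real.exp_eq_one_iff _).1 hE)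
  have hd1 : Real.exp (-(lam * Lam)) - b ≠ 0 := by
    intro h
    have h2 : -(lam * Lam) = beta * Lam := Real.exp_injective
      (show Real.exp (-(lam * Lam)) = Real.exp (beta * Lam) from by rw [← hb]; linarith)
    exact (mul_ne_zero hlb.ne' hLam) (by linear_combination -h2)
  have hd2 : a - Real.exp (-(beta * Lam)) ≠ 0 := by
    intro h
    have h2 : lam * Lam = -(beta * Lam) := Real.exp_injective
      (show Real.exp (lam * Lam) = Real.exp (-(beta * Lam)) from by rw [← ha]; linarith)
    exact (mul_ne_zero hlb.ne' hLam) (by linear_combination h2)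
  have h1 : ρp * (Real.exp (-(lam * Lam)) - b) = 1 - b := by
    rw [hρp, div_mul_cancel₀ _ hd1]
  have h2 : ρm * (a - Real.exp (-(beta * Lam))) = 1 - Real.exp (-(beta * Lam)) := by
    rw [hρm, div_mul_cancel₀ _ hd2]
  have h1' : ρp * (1 - a * b) = a * (1 - b) := by
    linear_combination a * h1 - ρp * hainv
  have h2' : ρm * (a * b - 1) = b - 1 := by
    linear_combination b * h2 + (ρm - 1) * hbinv
  have hsum : (ρp + ρm - 1) * (1 - a * b) = a - b := by
    linear_combination h1' - h2'
  have heq : beta = lam ↔ a = b := by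
    constructor
    · intro h; rw [ha, hb, h]
    · intro h
      have h3 : lam * Lam = beta * Lam := Real.exp_injective
        (show Real.exp (lam * Lam) = Real.exp (beta * Lam) from by rw [← ha, ← hb]; exact h)
      exact (mul_right_cancel₀ hLam h3).symm
  have hsum1 : beta = lam → ρp + ρm = 1 := by
    intro h
    have hab := heq.1 h
    have h0 : (ρp + ρm - 1) * (1 - a * b) = 0 := hsum.trans (by rw [hab]; ring)
    rcases mul_eq_zero.1 h0 with h' | h'
    · linarith
    · exact absurd (by linarith : a * b = 1) hab1
  refine ⟨?_, ⟨?_, ?_⟩⟩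
  · -- beta = lam ↔ τp = τm
    constructor
    · intro h
      have := hsum1 h
      rw [hτp, hτm, h]
      have hm : ρm = 1 - ρp := by linarith
      rw [hm]; ring
    · intro ht
      by_contra hne
      have h0 : (1 / Lam) * (ρp * (lam + beta) - beta)
          = (1 / (-Lam)) * (ρm * (lam + beta) - beta) := by
        rw [← hτp, ← hτm]; exact ht
      have h9 : ((ρp * (lam + beta) - beta) + (ρm * (lam + beta) - beta)) * (1 / Lam) = 0 := by
        linear_combination h0
      have hS : (ρp + ρm) * (lam + beta) = 2 * beta := by
        rcases mul_eq_zero.1 h9 with h' | h'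
        · linarith
        · exact absurd h' (one_div_ne_zero hLam)
      have hF : (lam - beta) * (1 - a * b) + (lam + beta) * (a - b) = 0 := by
        linear_combination (1 - a * b) * hS - (lam + beta) * h1' + (lam + beta) * h2'
      set v := (lam * Lam + beta * Lam) / 2 with hv
      set u := (lam * Lam - beta * Lam) / 2 with huu
      have e1 : Real.exp v * Real.exp u = a := by
        rw [← Real.exp_add, ha]; congr 1; rw [hv, huu]; ring
      have e2 : Real.exp v * Real.exp (-u) = b := by
        rw [← Real.exp_add, hb]; congr 1; rw [hv, huu]; ring
      have e3 : Real.exp v * Real.exp v = a * b := by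
        rw [← Real.exp_add, ha, hb, ← Real.exp_add]; congr 1; rw [hv]; ring
      have e4 : Real.exp v * Real.exp (-v) = 1 := by rw [← Real.exp_add]; simp
      have hamb : a - b = Real.exp v * (2 * Real.sinh u) := by
        rw [Real.sinh_eq]; linear_combination e2 - e1
      have h1ab : 1 - a * b = -(Real.exp v * (2 * Real.sinh v)) := by
        rw [Real.sinh_eq]; linear_combination e3 - e4
      rw [hamb, h1ab] at hF
      have h6 : (u * Real.sinh v - v * Real.sinh u) * (4 * Real.exp v) = 0 := by
        linear_combination (-Lam) * hF + (4 * Real.exp v * Real.sinh v) * huu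
          - (4 * Real.exp v * Real.sinh u) * hv
      have h8 : (4 : ℝ) * Real.exp v ≠ 0 := by positivity
      have h7 : u * Real.sinh v = v * Real.sinh u := by
        have := (mul_eq_zero.1 h6).resolve_right h8
        linarith
      have hu0 : u ≠ 0 := by
        rw [huu]
        intro h
        apply hne
        have h9' : (beta - lam) * Lam = 0 := by linear_combination -2 * h
        rcases mul_eq_zero.1 h9' with h' | h'
        · linarith
        · exact absurd h' hLam
      have habs : |u| < |v| := by
        rw [← sq_lt_sq, huu, hv]
        have hxy : 0 < lam * Lam * (beta * Lam) := by
          have hq : lam * Lam * (beta * Lam) = lam * beta * Lam ^ 2 := by ring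
          rw [hq]
          positivity
        nlinarith
      exact ddm_aux_key hu0 habs h7
  · -- beta = lam ↔ ρp = 1 - ρm
    constructor
    · intro h
      have := hsum1 h
      linarith
    · intro h
      apply heq.2
      have h0 : a - b = 0 := by rw [← hsum, h]; ring
      linarith
  · -- moreover
    intro h
    have hab : a = b := heq.1 h
    rw [← hab] at h1'
    have ha1 : a ≠ 1 := by
      intro hE
      rw [ha] at hE
      exact mul_ne_zero hlam.ne' hLam ((Real.exp_eq_one_iff _).1 hE)
    have hsum' : ρp * (1 + a) = a := by
      have h9 : (ρp * (1 + a) - a) * (1 - a) = 0 := by linear_combination h1'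
      rcases mul_eq_zero.1 h9 with h' | h'
      · linarith
      · exact absurd (by linarith : a = 1) ha1
    constructor
    · have hpos : (0:ℝ) < 1 + Real.exp (-(lam * Lam)) := by positivity
      rw [eq_div_iff hpos.ne']
      linear_combination Real.exp (-(lam * Lam)) * hsum' + (1 - ρp) * hainv
    · have hw : Real.exp (lam * Lam / 2) * Real.exp (lam * Lam / 2) = a := by
        rw [← Real.exp_add, ha]; congr 1; ring
      have hw0 : Real.exp (lam * Lam / 2) ≠ 0 := Real.exp_ne_zero _
      have hwinv : Real.exp (lam * Lam / 2) * (Real.exp (lam * Lam / 2))⁻¹ = 1 :=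
        mul_inv_cancel₀ hw0
      have ha10 : a + 1 ≠ 0 := by positivity
      have ht : Real.tanh (lam * Lam / 2) = (a - 1) / (a + 1) := by
        rw [Real.tanh_eq_sinh_div_cosh,
          div_eq_div_iff (Real.cosh_pos (x := lam * Lam / 2)).ne' ha10,
          Real.sinh_eq, Real.cosh_eq, Real.exp_neg]
        linear_combination (Real.exp (lam * Lam / 2))⁻¹ * hw
          - Real.exp (lam * Lam / 2) * hwinv
      rw [h] at hτp
      have hLinv : Lam * Lam⁻¹ = 1 := mul_inv_cancel₀ hLam
      have hden : lam * Lam * (a + 1) ≠ 0 := mul_ne_zero (mul_ne_zero hlam.ne' hLam) ha10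
      rw [hτp, ht, div_mul_div_comm, eq_div_iff hden]
      linear_combination (lam ^ 2 * (2 * ρp - 1) * (a + 1)) * hLinv + 2 * lam ^ 2 * hsum'
end

section
/- Let M be a stochastic matrix of finite order, ζ ∈ (0,1), and r ≥ 1 an integer. For n ≥ 0 let P[N>n] = ∑_{m=n+1}^∞ C(m+r−1, r−1) ζᵐ (1−ζ)ʳ (the survival probabilities of the negative binomial distribution). Then the series ∑_{n=0}^∞ P[N>n] Mⁿ converges entrywise and equals −(∑_{k=0}^{r} C(r,k) (−ζ)ᵏ ∑_{j=0}^{k−1} Mʲ)·(I − ζM)^{−r}, with the convention that the inner sum ∑_{j=0}^{k−1} Mʲ is the zero matrix when k = 0. -/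
open Matrix Finset Filter
open scoped NNReal

/-- A (left) stochastic matrix: nonnegative entries, each column sums to 1. -/
def IsStochastic {n : Type*} [Fintype n] (B : Matrix n n ℝ) : Prop :=
  (∀ i j, 0 ≤ B i j) ∧ ∀ j, ∑ i, B i j = 1

section Aux

private lemma guard_sum_swap (g : ℕ → ℝ) (t s : ℕ) :
    ∑ i ∈ Finset.range (t+1), (if i ≤ s then g i else 0)
      = ∑ i ∈ Finset.range (s+1), (if i ≤ t then g i else 0) := by
  have h : ∀ a b : ℕ, ∑ i ∈ Finset.range (a+1), (if i ≤ b then g i else 0)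
      = ∑ i ∈ Finset.range (min a b + 1), g i := by
    intro a b
    rw [← Finset.sum_filter]
    congr 1
    ext i
    simp only [Finset.mem_filter, Finset.mem_range, Nat.lt_succ_iff]
    omega
  rw [h, h, min_comm]

private lemma coeff_one_sub_X_pow (r j : ℕ) :
    (PowerSeries.coeff j) ((1 - PowerSeries.X : PowerSeries ℝ) ^ r)
      = if j ≤ r then (-1 : ℝ)^j * (r.choose j : ℝ) else 0 := by
  have h : ((1 - PowerSeries.X : PowerSeries ℝ)) ^ r
      = ∑ k ∈ Finset.range (r+1),
          PowerSeries.C (R := ℝ) ((-1)^k * (r.choose k : ℝ)) * PowerSeries.X ^ k := by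
    rw [sub_eq_add_neg, add_comm, Commute.add_pow (Commute.one_right _)]
    refine Finset.sum_congr rfl fun k hk => ?_
    have h1 : (-PowerSeries.X : PowerSeries ℝ)^k
        = PowerSeries.C (R := ℝ) ((-1)^k) * PowerSeries.X ^ k := by
      rw [neg_pow, _root_.map_pow, _root_.map_neg, _root_.map_one]
    rw [one_pow, mul_one, h1, _root_.map_mul, _root_.map_natCast]
    ring
  rw [h, map_sum]
  have h2 : ∀ k ∈ Finset.range (r+1),
      (PowerSeries.coeff j) (PowerSeries.C (R := ℝ) ((-1)^k * (r.choose k : ℝ)) * PowerSeries.X ^ k)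
        = if k = j then (-1 : ℝ)^k * (r.choose k : ℝ) else 0 := by
    intro k _
    rw [PowerSeries.coeff_C_mul, PowerSeries.coeff_X_pow]
    by_cases hjk : j = k
    · simp [hjk]
    · simp [hjk, Ne.symm hjk]
  rw [Finset.sum_congr rfl h2, Finset.sum_ite_eq' (Finset.range (r+1)) j
    (fun k => (-1 : ℝ)^k * (r.choose k : ℝ))]
  simp [Nat.lt_succ_iff]

private lemma binom_id {r : ℕ} (hr : 1 ≤ r) {t : ℕ} (ht : 1 ≤ t) :
    ∑ i ∈ Finset.range (r+1),
      (if i ≤ t then (-1:ℝ)^i * (r.choose i : ℝ) * (((r-1) + (t-i)).choose (r-1) : ℝ) else 0)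
      = 0 := by
  set d := r - 1 with hd
  have hdr : d + 1 = r := by omega
  have h0 : (PowerSeries.mk fun n => ((d + n).choose d : ℝ)) * (1 - PowerSeries.X)^(d+1) = 1 :=
    PowerSeries.mk_add_choose_mul_one_sub_pow_eq_one ℝ d
  have h1 := congrArg (PowerSeries.coeff t) h0
  rw [PowerSeries.coeff_mul, PowerSeries.coeff_one, if_neg (by omega)] at h1
  rw [Finset.Nat.sum_antidiagonal_eq_sum_range_succ_mk] at h1
  simp only [PowerSeries.coeff_mk, hdr, coeff_one_sub_X_pow] at h1
  have h2 : ∑ k ∈ Finset.range (t+1),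
      ((d + k).choose d : ℝ) * (if t - k ≤ r then (-1:ℝ)^(t-k) * (r.choose (t-k) : ℝ) else 0)
      = ∑ i ∈ Finset.range (t+1),
        (if i ≤ r then (-1:ℝ)^i * (r.choose i : ℝ) * ((d + (t-i)).choose d : ℝ) else 0) := by
    rw [← Finset.sum_range_reflect (fun k =>
      ((d + k).choose d : ℝ) * (if t - k ≤ r then (-1:ℝ)^(t-k) * (r.choose (t-k) : ℝ) else 0))
      (t+1)]
    refine Finset.sum_congr rfl fun i hi => ?_
    rw [Finset.mem_range, Nat.lt_succ_iff] at hi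
    have e1 : t + 1 - 1 - i = t - i := by omega
    have e2 : t - (t - i) = i := by omega
    rw [e1, e2]
    split_ifs with h
    · ring
    · rw [mul_zero]
  rw [h2, guard_sum_swap (fun i => (-1:ℝ)^i * (r.choose i : ℝ) * ((d + (t-i)).choose d : ℝ))
    t r] at h1
  exact h1

end Aux

section Main

attribute [local instance] Matrix.linftyOpNormedAddCommGroup Matrix.linftyOpNormedRing
  Matrix.linftyOpNormedSpace

private theorem main_aux
    {n : Type*} [Fintype n] [DecidableEq n] [Nonempty n]
    (M : Matrix n n ℝ) (hM : IsStochastic M)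
    (ζ : ℝ) (hζ : ζ ∈ Set.Ioo (0 : ℝ) 1) (r : ℕ) (hr : 1 ≤ r) :
    HasSum
      (fun k : ℕ =>
        (∑' m : ℕ, ((k + 1 + m + r - 1).choose (r - 1) : ℝ) * ζ ^ (k + 1 + m) *
          (1 - ζ) ^ r) • M ^ k)
      (-(∑ i ∈ Finset.range (r + 1),
          ((r.choose i : ℝ) * (-ζ) ^ i) • ∑ j ∈ Finset.range i, M ^ j) *
        ((1 - ζ • M)⁻¹) ^ r) := by
  obtain ⟨hζ0, hζ1⟩ := hζ
  have hζ1' : (0:ℝ) < 1 - ζ := by linarith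
  have hdr : (r-1) + 1 = r := by omega
  set p : ℕ → ℝ := fun s => ((s + r - 1).choose (r-1) : ℝ) * ζ^s * (1-ζ)^r with hp
  have hp₁ : ∀ s, p s = ((s + (r-1)).choose (r-1) : ℝ) * ζ^s * (1-ζ)^r := by
    intro s
    simp only [hp]
    rw [show s + r - 1 = s + (r-1) by omega]
  have hp₂ : ∀ s, p s = (((r-1) + s).choose (r-1) : ℝ) * ζ^s * (1-ζ)^r := by
    intro s
    rw [hp₁ s, Nat.add_comm s (r-1)]
  have hp0 : ∀ s, 0 ≤ p s := by
    intro s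
    rw [hp₁]
    positivity
  -- total mass one
  have hζn : ‖ζ‖ < 1 := by rw [Real.norm_eq_abs, abs_of_nonneg hζ0.le]; exact hζ1
  have hgeom := hasSum_choose_mul_geometric_of_norm_lt_one (𝕜 := ℝ) (r-1) hζn
  have hmass : HasSum p 1 := by
    have h1 := hgeom.mul_right ((1-ζ)^r)
    rw [hdr] at h1
    have h2 : HasSum p (1 / (1-ζ)^r * (1-ζ)^r) :=
      h1.congr_fun fun s => hp₁ s
    have h3 : 1 / (1-ζ)^r * (1-ζ)^r = 1 := by
      field_simp
    rwa [h3] at h2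
  -- geometric domination of p
  set ρ : ℝ := (1+ζ)/2 with hρ
  have hρ0 : (0:ℝ) < ρ := by rw [hρ]; linarith
  have hζρ : ζ < ρ := by rw [hρ]; linarith
  have hρ1 : ρ < 1 := by rw [hρ]; linarith
  have hsumv : Summable (fun s : ℕ => ((s + (r-1)).choose (r-1) : ℝ) * (ζ/ρ)^s) :=
    summable_choose_mul_geometric_of_norm_lt_one (r-1)
      (by rw [Real.norm_eq_abs, abs_of_nonneg (div_nonneg hζ0.le hρ0.le)]
          exact (div_lt_one hρ0).mpr hζρ)
  obtain ⟨K, hK⟩ : ∃ K : ℝ, ∀ s : ℕ, ((s + (r-1)).choose (r-1) : ℝ) * (ζ/ρ)^s ≤ K := by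
    obtain ⟨K, hK⟩ := hsumv.tendsto_atTop_zero.bddAbove_range
    exact ⟨K, fun s => hK ⟨s, rfl⟩⟩
  have hpbound : ∀ s, p s ≤ (K * (1-ζ)^r) * ρ^s := by
    intro s
    have e1 : (ζ/ρ)^s * ρ^s = ζ^s := by
      rw [div_pow, div_mul_cancel₀]
      exact pow_ne_zero _ hρ0.ne'
    have e2 : p s = (((s + (r-1)).choose (r-1) : ℝ) * (ζ/ρ)^s) * ρ^s * (1-ζ)^r := by
      rw [hp₁ s, ← e1]
      ring
    rw [e2]
    have h3 : (((s + (r-1)).choose (r-1) : ℝ) * (ζ/ρ)^s) * ρ^s ≤ K * ρ^s :=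
      mul_le_mul_of_nonneg_right (hK s) (pow_nonneg hρ0.le s)
    calc (((s + (r-1)).choose (r-1) : ℝ) * (ζ/ρ)^s) * ρ^s * (1-ζ)^r
        ≤ K * ρ^s * (1-ζ)^r := mul_le_mul_of_nonneg_right h3 (pow_nonneg hζ1'.le r)
      _ = (K * (1-ζ)^r) * ρ^s := by ring
  -- the tail function
  set tail : ℕ → ℝ := fun k => ∑' m, p (k+1+m) with htail
  have hsum_shift : ∀ k, Summable (fun m => p (k+1+m)) := by
    intro k
    have h1 := (summable_nat_add_iff (f := p) (k+1)).mpr hmass.summable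
    exact h1.congr fun m => by rw [Nat.add_comm]
  have htail_hasSum : ∀ k, HasSum (fun m => p (k+1+m)) (tail k) := by
    intro k
    simp only [htail]
    exact (hsum_shift k).hasSum
  have htail_eq : ∀ k, tail k = 1 - ∑ i ∈ Finset.range (k+1), p i := by
    intro k
    have h1 : HasSum (fun m => p (m + (k+1))) (1 - ∑ i ∈ Finset.range (k+1), p i) := by
      rw [hasSum_nat_add_iff]
      have e : (1 - ∑ i ∈ Finset.range (k+1), p i) + ∑ i ∈ Finset.range (k+1), p i = 1 := by
        ring
      rw [e]
      exact hmass
    have h2 : HasSum (fun m => p (k+1+m)) (1 - ∑ i ∈ Finset.range (k+1), p i) :=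
      h1.congr_fun fun m => by rw [Nat.add_comm]
    exact (htail_hasSum k).unique h2
  have ht0 : ∀ k, 0 ≤ tail k := by
    intro k
    simp only [htail]
    exact tsum_nonneg fun m => hp0 _
  have htb : ∀ k, tail k ≤ ((K * (1-ζ)^r) * ρ * (1-ρ)⁻¹) * ρ^k := by
    intro k
    have hgs : Summable (fun m : ℕ => ((K * (1-ζ)^r) * ρ^(k+1)) * ρ^m) :=
      (summable_geometric_of_lt_one hρ0.le hρ1).mul_left _
    have h1 : tail k ≤ ∑' m, ((K * (1-ζ)^r) * ρ^(k+1)) * ρ^m := by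
      simp only [htail]
      refine Summable.tsum_le_tsum (fun m => ?_) (hsum_shift k) hgs
      calc p (k+1+m) ≤ (K * (1-ζ)^r) * ρ^(k+1+m) := hpbound _
        _ = ((K * (1-ζ)^r) * ρ^(k+1)) * ρ^m := by rw [pow_add (a := ρ) (m := k+1)]; ring
    calc tail k ≤ ∑' m, ((K * (1-ζ)^r) * ρ^(k+1)) * ρ^m := h1
      _ = ((K * (1-ζ)^r) * ρ^(k+1)) * (1-ρ)⁻¹ := by
          rw [tsum_mul_left, tsum_geometric_of_lt_one hρ0.le hρ1]
      _ = ((K * (1-ζ)^r) * ρ * (1-ρ)⁻¹) * ρ^k := by rw [pow_succ]; ring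
  have hstail : Summable tail :=
    Summable.of_nonneg_of_le ht0 htb
      ((summable_geometric_of_lt_one hρ0.le hρ1).mul_left _)
  have htrec : ∀ t, tail t - tail (t+1) = p (t+1) := by
    intro t
    rw [htail_eq, htail_eq, Finset.sum_range_succ (n := t+1)]
    ring
  have htail0 : tail 0 = 1 - p 0 := by
    rw [htail_eq, Finset.sum_range_one]
  have htlim : Tendsto tail atTop (nhds 0) := by
    have h1 : Tendsto (fun K : ℕ => ∑ i ∈ Finset.range K, p i) atTop (nhds 1) :=
      hmass.tendsto_sum_nat
    have h3 : Tendsto (fun k : ℕ => ∑ i ∈ Finset.range (k+1), p i) atTop (nhds 1) :=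
      h1.comp (tendsto_add_atTop_nat 1)
    have h4 : Tendsto (fun k : ℕ => 1 - ∑ i ∈ Finset.range (k+1), p i) atTop (nhds (1-1)) :=
      tendsto_const_nhds.sub h3
    rw [sub_self] at h4
    exact h4.congr fun k => (htail_eq k).symm
  -- coefficients and the fundamental recurrence
  set c : ℕ → ℝ := fun i => (r.choose i : ℝ) * (-ζ)^i with hc
  set Tl : ℕ → ℕ → ℝ := fun j i => if i ≤ j then tail (j - i) else 1 with hTl
  set u : ℕ → ℝ := fun j => ∑ i ∈ Finset.range (r+1), c i * Tl j i with hu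
  have hB : ∀ t : ℕ, 1 ≤ t →
      ∑ i ∈ Finset.range (r+1), c i * (if i ≤ t then p (t - i) else 0) = 0 := by
    intro t ht
    have hbin := binom_id hr ht
    have h1 : ∀ i ∈ Finset.range (r+1),
        c i * (if i ≤ t then p (t - i) else 0)
        = ((1-ζ)^r * ζ^t) *
          (if i ≤ t then (-1:ℝ)^i * (r.choose i : ℝ) * (((r-1) + (t-i)).choose (r-1) : ℝ)
           else 0) := by
      intro i _
      simp only [hc]
      split_ifs with hit
      · rw [hp₂ (t-i)]
        have hexp : ζ^i * ζ^(t-i) = ζ^t := by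
          rw [← pow_add]
          congr 1
          omega
        rw [neg_pow, ← hexp]
        ring
      · rw [mul_zero, mul_zero]
    rw [Finset.sum_congr rfl h1, ← Finset.mul_sum, hbin, mul_zero]
  have hstep : ∀ j, u j = u (j+1) := by
    intro j
    have h1 : u j - u (j+1)
        = ∑ i ∈ Finset.range (r+1), c i * (if i ≤ j+1 then p (j+1-i) else 0) := by
      simp only [hu]
      rw [← Finset.sum_sub_distrib]
      refine Finset.sum_congr rfl fun i _ => ?_
      rw [← mul_sub]
      congr 1
      simp only [hTl]
      by_cases hij : i ≤ j
      · rw [if_pos hij, if_pos (show i ≤ j+1 by omega), if_pos (show i ≤ j+1 by omega)]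
        have h2 := htrec (j - i)
        have e1 : j - i + 1 = j + 1 - i := by omega
        rw [e1] at h2
        exact h2
      · by_cases hij1 : i ≤ j+1
        · have hie : i = j + 1 := by omega
          rw [if_neg hij, if_pos hij1, if_pos hij1, hie, Nat.sub_self, htail0]
          ring
        · rw [if_neg hij, if_neg hij1, if_neg hij1, sub_self]
    have h3 := hB (j+1) (by omega)
    rw [h3] at h1
    linarith [h1]
  have huconst : ∀ j, u j = u 0 := by
    intro j
    induction j with
    | zero => rfl
    | succ j ih => rw [← hstep, ih]
  have hulim : Tendsto u atTop (nhds 0) := by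
    have h1 : ∀ i, Tendsto (fun j => c i * Tl j i) atTop (nhds (c i * 0)) := by
      intro i
      refine Tendsto.const_mul _ ?_
      have h2 : Tendsto (fun j : ℕ => tail (j - i)) atTop (nhds 0) :=
        htlim.comp (tendsto_sub_atTop_nat i)
      refine h2.congr' ?_
      filter_upwards [eventually_ge_atTop i] with j hj
      simp only [hTl]
      rw [if_pos hj]
    have h3 : Tendsto u atTop (nhds (∑ i ∈ Finset.range (r+1), c i * 0)) := by
      simp only [hu]
      exact tendsto_finset_sum _ fun i _ => h1 i
    simpa using h3
  have hu0 : ∀ j, u j = 0 := by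
    have h1 : Tendsto u atTop (nhds (u 0)) :=
      Tendsto.congr (fun j => (huconst j).symm) tendsto_const_nhds
    have h2 : u 0 = 0 := tendsto_nhds_unique h1 hulim
    intro j
    rw [huconst j, h2]
  -- matrix layer: stochastic powers and norm bounds
  have hstoch_mul : ∀ (A B : Matrix n n ℝ), IsStochastic A → IsStochastic B →
      IsStochastic (A * B) := by
    intro A B hA hB
    constructor
    · intro i j
      rw [Matrix.mul_apply]
      exact Finset.sum_nonneg fun k _ => mul_nonneg (hA.1 i k) (hB.1 k j)
    · intro j
      simp_rw [Matrix.mul_apply]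
      rw [Finset.sum_comm]
      have h1 : ∀ k, ∑ i, A i k * B k j = B k j := by
        intro k
        rw [← Finset.sum_mul, hA.2 k, one_mul]
      simp_rw [h1]
      exact hB.2 j
  have hstoch_one : IsStochastic (1 : Matrix n n ℝ) := by
    constructor
    · intro i j
      by_cases h : i = j <;> simp [Matrix.one_apply, h]
    · intro j
      simp [Matrix.one_apply]
  have hMpow : ∀ k, IsStochastic (M^k) := by
    intro k
    induction k with
    | zero => simpa using hstoch_one
    | succ k ih => rw [pow_succ]; exact hstoch_mul _ _ ih hM
  have hentry : ∀ (A : Matrix n n ℝ), IsStochastic A → ∀ i j, A i j ≤ 1 := by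
    intro A hA i j
    calc A i j ≤ ∑ i', A i' j :=
        Finset.single_le_sum (fun i' _ => hA.1 i' j) (Finset.mem_univ i)
      _ = 1 := hA.2 j
  have hnorm : ∀ (A : Matrix n n ℝ), IsStochastic A → ‖A‖ ≤ (Fintype.card n : ℝ) := by
    intro A hA
    rw [Matrix.linfty_opNorm_def]
    have h1 : (Finset.univ.sup fun i : n => ∑ j : n, ‖A i j‖₊) ≤ (Fintype.card n : ℝ≥0) := by
      refine Finset.sup_le fun i _ => ?_
      calc ∑ j : n, ‖A i j‖₊ ≤ ∑ _j : n, (1 : ℝ≥0) := by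
            refine Finset.sum_le_sum fun j _ => ?_
            have h2 : ‖A i j‖ ≤ 1 := by
              rw [Real.norm_eq_abs, abs_of_nonneg (hA.1 i j)]
              exact hentry A hA i j
            exact NNReal.coe_le_coe.mp (by simpa using h2)
        _ = (Fintype.card n : ℝ≥0) := by simp
    calc ((Finset.univ.sup fun i : n => ∑ j : n, ‖A i j‖₊ : ℝ≥0) : ℝ)
        ≤ ((Fintype.card n : ℝ≥0) : ℝ) := NNReal.coe_le_coe.mpr h1
      _ = (Fintype.card n : ℝ) := by simp
  -- invertibility of 1 - ζ M
  have hnormT : ‖Mᵀ‖ ≤ 1 := by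
    rw [Matrix.linfty_opNorm_def]
    have h1 : (Finset.univ.sup fun i : n => ∑ j : n, ‖Mᵀ i j‖₊) ≤ (1 : ℝ≥0) := by
      refine Finset.sup_le fun i _ => ?_
      have h2 : ((∑ j : n, ‖Mᵀ i j‖₊ : ℝ≥0) : ℝ) = 1 := by
        rw [NNReal.coe_sum]
        have h3 : ∀ j, ((‖Mᵀ i j‖₊ : ℝ≥0) : ℝ) = M j i := by
          intro j
          rw [coe_nnnorm, Matrix.transpose_apply, Real.norm_eq_abs, abs_of_nonneg (hM.1 j i)]
        rw [Finset.sum_congr rfl fun j _ => h3 j]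
        exact hM.2 i
      exact le_of_eq (NNReal.coe_injective (by simpa using h2))
    calc ((Finset.univ.sup fun i : n => ∑ j : n, ‖Mᵀ i j‖₊ : ℝ≥0) : ℝ) ≤ ((1:ℝ≥0) : ℝ) :=
        NNReal.coe_le_coe.mpr h1
      _ = 1 := by simp
  have hlt : ‖ζ • Mᵀ‖ < 1 := by
    rw [norm_smul, Real.norm_eq_abs, abs_of_nonneg hζ0.le]
    calc ζ * ‖Mᵀ‖ ≤ ζ * 1 := mul_le_mul_of_nonneg_left hnormT hζ0.le
      _ = ζ := mul_one ζ
      _ < 1 := hζ1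
  have hunitT : IsUnit ((1 : Matrix n n ℝ) - ζ • Mᵀ) := isUnit_one_sub_of_norm_lt_one hlt
  have hunit : IsUnit ((1 : Matrix n n ℝ) - ζ • M).det := by
    have hT : ((1 : Matrix n n ℝ) - ζ • M)ᵀ = 1 - ζ • Mᵀ := by
      rw [Matrix.transpose_sub, Matrix.transpose_one, Matrix.transpose_smul]
    have h1 : IsUnit (((1 : Matrix n n ℝ) - ζ • M)ᵀ).det := by
      rw [hT]
      exact (Matrix.isUnit_iff_isUnit_det _).mp hunitT
    rwa [Matrix.det_transpose] at h1
  have hQF : ((1 : Matrix n n ℝ) - ζ • M) * (1 - ζ • M)⁻¹ = 1 := Matrix.mul_nonsing_inv _ hunit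
  have hFQ : ((1 : Matrix n n ℝ) - ζ • M)⁻¹ * (1 - ζ • M) = 1 := Matrix.nonsing_inv_mul _ hunit
  have hcomm : Commute ((1 : Matrix n n ℝ) - ζ • M) ((1 - ζ • M)⁻¹) := by
    unfold Commute SemiconjBy
    rw [hQF, hFQ]
  have hQFr : ((1 : Matrix n n ℝ) - ζ • M)^r * ((1 - ζ • M)⁻¹)^r = 1 := by
    rw [← hcomm.mul_pow, hQF, one_pow]
  -- the main series converges
  have hZsummable : Summable (fun k => tail k • M^k) := by
    refine Summable.of_norm_bounded (g := fun k => tail k * (Fintype.card n : ℝ))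
      (hstail.mul_right _) fun k => ?_
    rw [norm_smul, Real.norm_eq_abs, abs_of_nonneg (ht0 k)]
    exact mul_le_mul_of_nonneg_left (hnorm _ (hMpow k)) (ht0 k)
  obtain ⟨Z, hZ⟩ := hZsummable
  -- shifted sums
  have hZi : ∀ i, HasSum (fun k => Tl k i • M^k) (Z * M^i + ∑ j ∈ Finset.range i, M^j) := by
    intro i
    have hfe : (fun k => Tl (k+i) i • M^(k+i)) = fun k => (tail k • M^k) * M^i := by
      funext k
      simp only [hTl]
      rw [if_pos (Nat.le_add_left i k), Nat.add_sub_cancel, pow_add, smul_mul_assoc]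
    have h1 := hZ.mul_right (M^i)
    rw [← hfe] at h1
    have h2 := (hasSum_nat_add_iff (f := fun k => Tl k i • M^k) i).mp h1
    have h3 : ∑ k ∈ Finset.range i, Tl k i • M^k = ∑ j ∈ Finset.range i, M^j := by
      refine Finset.sum_congr rfl fun k hk => ?_
      rw [Finset.mem_range] at hk
      simp only [hTl]
      rw [if_neg (by omega), one_smul]
    rwa [h3] at h2
  have hcomb : HasSum (fun k => ∑ i ∈ Finset.range (r+1), (c i * Tl k i) • M^k)
      (∑ i ∈ Finset.range (r+1), c i • (Z * M^i + ∑ j ∈ Finset.range i, M^j)) := by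
    refine hasSum_sum fun i _ => ?_
    exact ((hZi i).const_smul (c i)).congr_fun fun k => (smul_smul (c i) (Tl k i) (M^k)).symm
  have hzero : (∑ i ∈ Finset.range (r+1), c i • (Z * M^i + ∑ j ∈ Finset.range i, M^j)) = 0 := by
    have h1 : (fun k => ∑ i ∈ Finset.range (r+1), (c i * Tl k i) • M^k)
        = fun _ => (0 : Matrix n n ℝ) := by
      funext k
      rw [← Finset.sum_smul]
      have h2 : ∑ i ∈ Finset.range (r+1), c i * Tl k i = 0 := by
        have h4 := hu0 k
        simp only [hu] at h4
        exact h4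
      rw [h2, zero_smul]
    rw [h1] at hcomb
    exact hcomb.unique hasSum_zero
  -- algebraic reorganization
  have hsplit : Z * (∑ i ∈ Finset.range (r+1), c i • M^i)
      + (∑ i ∈ Finset.range (r+1), c i • ∑ j ∈ Finset.range i, M^j) = 0 := by
    rw [← hzero, Finset.mul_sum, ← Finset.sum_add_distrib]
    refine Finset.sum_congr rfl fun i _ => ?_
    rw [smul_add, mul_smul_comm]
  have hQexp : ((1 : Matrix n n ℝ) - ζ • M)^r = ∑ i ∈ Finset.range (r+1), c i • M^i := by
    have h1 : (1 : Matrix n n ℝ) - ζ • M = -(ζ • M) + 1 := by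
      rw [sub_eq_neg_add]
    rw [h1, Commute.add_pow (Commute.one_right _)]
    refine Finset.sum_congr rfl fun i _ => ?_
    rw [one_pow, mul_one, ← neg_smul, smul_pow]
    have h2 : (M:Matrix n n ℝ)^i * ((r.choose i : ℕ) : Matrix n n ℝ)
        = (r.choose i : ℝ) • M^i := by
      rw [← (Nat.cast_commute (r.choose i) (M^i)).eq, ← nsmul_eq_mul,
        ← Nat.cast_smul_eq_nsmul ℝ]
    rw [smul_mul_assoc, h2, smul_smul]
    simp only [hc]
    rw [mul_comm]
  have hZQ : Z * ((1 : Matrix n n ℝ) - ζ • M)^r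
      = -(∑ i ∈ Finset.range (r+1), c i • ∑ j ∈ Finset.range i, M^j) := by
    rw [hQexp]
    exact add_eq_zero_iff_eq_neg.mp hsplit
  have hZval : Z = -(∑ i ∈ Finset.range (r+1), c i • ∑ j ∈ Finset.range i, M^j)
      * ((1 - ζ • M)⁻¹)^r := by
    calc Z = Z * (((1 : Matrix n n ℝ) - ζ • M)^r * ((1 - ζ • M)⁻¹)^r) := by
          rw [hQFr, mul_one]
      _ = (Z * ((1 : Matrix n n ℝ) - ζ • M)^r) * ((1 - ζ • M)⁻¹)^r := by rw [← mul_assoc]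
      _ = -(∑ i ∈ Finset.range (r+1), c i • ∑ j ∈ Finset.range i, M^j)
          * ((1 - ζ • M)⁻¹)^r := by rw [hZQ]
  rw [hZval] at hZ
  have hfun : (fun k : ℕ =>
      (∑' m : ℕ, ((k + 1 + m + r - 1).choose (r - 1) : ℝ) * ζ ^ (k + 1 + m) *
        (1 - ζ) ^ r) • M ^ k) = fun k : ℕ => tail k • M ^ k := by
    simp only [htail, hp]
  have hcoef : -(∑ i ∈ Finset.range (r + 1),
      ((r.choose i : ℝ) * (-ζ) ^ i) • ∑ j ∈ Finset.range i, M ^ j)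
      = -(∑ i ∈ Finset.range (r+1), c i • ∑ j ∈ Finset.range i, M^j) := by
    simp only [hc]
  rw [hfun, hcoef]
  exact hZ

end Main

/-- Proposition (survival generating function of a negative binomial stopping number
evaluated at a stochastic matrix): for a stochastic matrix `M`, `ζ ∈ (0,1)` and an
integer `r ≥ 1`, with `P[N>k] = ∑_{m>k} C(m+r−1, r−1) ζᵐ (1−ζ)ʳ`, the series
`∑ₖ P[N>k] Mᵏ` converges entrywise to
`−(∑_{i=0}^{r} C(r,i) (−ζ)ⁱ ∑_{j=0}^{i−1} Mʲ)·(I − ζM)^{−r}`. -/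
theorem negBinomial_sgf_of_stochastic_matrix
    {n : Type*} [Fintype n] [DecidableEq n] [Nonempty n]
    (M : Matrix n n ℝ) (hM : IsStochastic M)
    (ζ : ℝ) (hζ : ζ ∈ Set.Ioo (0 : ℝ) 1) (r : ℕ) (hr : 1 ≤ r) :
    HasSum
      (fun k : ℕ =>
        (∑' m : ℕ, ((k + 1 + m + r - 1).choose (r - 1) : ℝ) * ζ ^ (k + 1 + m) *
          (1 - ζ) ^ r) • M ^ k)
      (-(∑ i ∈ Finset.range (r + 1),
          ((r.choose i : ℝ) * (-ζ) ^ i) • ∑ j ∈ Finset.range i, M ^ j) *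
        ((1 - ζ • M)⁻¹) ^ r) := by
  exact main_aux M hM ζ hζ r hr
end
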